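/- Let ℛ be a linear growing TRS over 𝓕 and let 𝒟(ℛ) be the powerset-pair automaton built from 𝒞'_{NF_{ℛ•}}(ℛ). For every s ∈ 𝒯(𝓕): s ∈ L(𝒟(ℛ)) if and only if s is reducible with respect to ℛ and s[•]_p ∈ (→_ℛ*)[NF_{ℛ•}] for every redex position p of s. -/

import Mathlib

set_option maxHeartbeats 1000000

/-! ## Terms over a signature -/

/-- Terms over a signature given by a type `F` of function symbols together with
an arity function `ar`; variables are natural numbers. -/
inductive Term (F : Type) (ar : F → ℕ) : Type
  | var : ℕ → Term F ar
  | app : (f : F) → (Fin (ar f) → Term F ar) → Term F ar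

namespace Term

variable {F : Type} {ar : F → ℕ}

/-- The (finite) set of variables of a term. -/
def vars : Term F ar → Finset ℕ
  | var n => {n}
  | app _ ts => Finset.univ.biUnion fun i => (ts i).vars

/-- A term is ground if it contains no variables. -/
def Ground (t : Term F ar) : Prop := t.vars = ∅

/-- The number of occurrences of the variable `n` in a term. -/
def count (n : ℕ) : Term F ar → ℕ
  | var m => if m = n then 1 else 0
  | app _ ts => ∑ i, (ts i).count n

/-- A term is linear if no variable occurs twice in it. -/
def Linear (t : Term F ar) : Prop := ∀ n, t.count n ≤ 1

/-- Applying a substitution to a term. -/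
def subst (σ : ℕ → Term F ar) : Term F ar → Term F ar
  | var n => σ n
  | app f ts => app f fun i => (ts i).subst σ

/-- The subterm at a position (a list of argument indices), if the position is valid. -/
def subtermAt : Term F ar → List ℕ → Option (Term F ar)
  | t, [] => some t
  | var _, _ :: _ => none
  | app f ts, i :: p => if h : i < ar f then (ts ⟨i, h⟩).subtermAt p else none

/-- Replacing the subterm at a position, if the position is valid. -/
def replaceAt : Term F ar → List ℕ → Term F ar → Option (Term F ar)
  | _, [], u => some u
  | var _, _ :: _, _ => none
  | app f ts, i :: p, u =>
      if h : i < ar f then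
        ((ts ⟨i, h⟩).replaceAt p u).map fun s => app f (Function.update ts ⟨i, h⟩ s)
      else none

/-- `s.IsSubtermOf t` : `s` is a subterm of `t`. -/
def IsSubtermOf (s t : Term F ar) : Prop := ∃ p, t.subtermAt p = some s

/-- Relabelling of function symbols along an arity-preserving map of signatures. -/
def relabel {G : Type} {arG : G → ℕ} (φ : F → G) (h : ∀ f, arG (φ f) = ar f) :
    Term F ar → Term G arG
  | var n => var n
  | app f ts => app (φ f) fun i => (ts (Fin.cast (h f) i)).relabel φ h

end Term

/-! ## Rewriting -/

/-- One-step rewriting with a set of rewrite rules: there are a position `p` of `s`,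
a rule `(l, r)` and a substitution `σ` with `s|_p = lσ` and `t = s[rσ]_p`. -/
def Rewrites {F : Type} {ar : F → ℕ} (R : Set (Term F ar × Term F ar))
    (s t : Term F ar) : Prop :=
  ∃ (p : List ℕ) (l r : Term F ar) (σ : ℕ → Term F ar),
    (l, r) ∈ R ∧ s.subtermAt p = some (l.subst σ) ∧ s.replaceAt p (r.subst σ) = some t

/-- Many-step rewriting (reflexive–transitive closure). -/
abbrev RewritesStar {F : Type} {ar : F → ℕ} (R : Set (Term F ar × Term F ar)) :
    Term F ar → Term F ar → Prop :=
  Relation.ReflTransGen (Rewrites R)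

/-- A term rewriting system: a finite set of rules whose left-hand sides are not variables. -/
structure TRS (F : Type) (ar : F → ℕ) where
  rules : Set (Term F ar × Term F ar)
  finite : rules.Finite
  lhs_not_var : ∀ lr ∈ rules, ∀ n, lr.1 ≠ Term.var n

namespace TRS

variable {F : Type} {ar : F → ℕ}

def LeftLinear (R : TRS F ar) : Prop := ∀ lr ∈ R.rules, lr.1.Linear

def RightLinear (R : TRS F ar) : Prop := ∀ lr ∈ R.rules, lr.2.Linear

/-- A TRS is linear if all left- and right-hand sides are linear terms. -/
def IsLinear (R : TRS F ar) : Prop := R.LeftLinear ∧ R.RightLinear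

/-- A TRS is growing if every variable occurring both in the left- and the right-hand
side of a rule occurs at depth 1 in the left-hand side. -/
def Growing (R : TRS F ar) : Prop :=
  ∀ lr ∈ R.rules, ∀ n ∈ lr.1.vars, n ∈ lr.2.vars →
    ∀ (f : F) (ts : Fin (ar f) → Term F ar), lr.1 = Term.app f ts →
      ∀ i, n ∈ (ts i).vars → ts i = Term.var n

/-- A redex is an instance of a left-hand side. -/
def IsRedex (R : TRS F ar) (s : Term F ar) : Prop :=
  ∃ lr ∈ R.rules, ∃ σ : ℕ → Term F ar, s = lr.1.subst σ

/-- `p` is a redex position of `s`. -/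
def RedexPos (R : TRS F ar) (s : Term F ar) (p : List ℕ) : Prop :=
  ∃ u, s.subtermAt p = some u ∧ R.IsRedex u

def Reducible (R : TRS F ar) (s : Term F ar) : Prop := ∃ p, R.RedexPos s p

/-- A term is root-stable if it cannot be rewritten to a redex. -/
def RootStable (R : TRS F ar) (s : Term F ar) : Prop :=
  ¬ ∃ t, RewritesStar R.rules s t ∧ R.IsRedex t

/-- Ground normal forms. -/
def NFset (R : TRS F ar) : Set (Term F ar) := { t | t.Ground ∧ ¬ R.Reducible t }

/-- Ground redexes. -/
def RedexSet (R : TRS F ar) : Set (Term F ar) := { t | t.Ground ∧ R.IsRedex t }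

/-- Root-stable ground terms. -/
def RSset (R : TRS F ar) : Set (Term F ar) := { t | t.Ground ∧ R.RootStable t }

/-- Relabelling a TRS along an arity-preserving map of signatures. -/
def relabel {G : Type} {arG : G → ℕ} (R : TRS F ar) (φ : F → G)
    (h : ∀ f, arG (φ f) = ar f) : TRS G arG where
  rules := (fun lr => (lr.1.relabel φ h, lr.2.relabel φ h)) '' R.rules
  finite := R.finite.image _
  lhs_not_var := by
    rintro lr ⟨lr0, h0, rfl⟩ n hn
    dsimp only at hn
    cases h1 : lr0.1 with
    | var m => exact absurd h1 (R.lhs_not_var lr0 h0 m)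
    | app f ts =>
        rw [h1] at hn
        simp only [Term.relabel] at hn
        cases hn

end TRS

/-! ## Tree automata -/

/-- A transition rule `f(q₁,…,qₙ) → q` of a bottom-up tree automaton. -/
abbrev TARule (F : Type) (ar : F → ℕ) (Q : Type) : Type :=
  (f : F) × ((Fin (ar f) → Q) × Q)

/-- A (finite bottom-up) tree automaton without ε-transitions. -/
structure TreeAutomaton (F : Type) (ar : F → ℕ) (Q : Type) where
  trans : Set (TARule F ar Q)
  final : Set Q

/-- `Reaches Δ t q` : the ground term `t` rewrites to the state `q` using the
transition rules `Δ`. -/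
inductive Reaches {F : Type} {ar : F → ℕ} {Q : Type} (Δ : Set (TARule F ar Q)) :
    Term F ar → Q → Prop
  | app {f : F} {ts : Fin (ar f) → Term F ar} {qs : Fin (ar f) → Q} {q : Q} :
      (∀ i, Reaches Δ (ts i) (qs i)) → (⟨f, qs, q⟩ : TARule F ar Q) ∈ Δ →
      Reaches Δ (Term.app f ts) q

/-- `ReachesT Δ θ t q` : the term `t`, whose variables are interpreted as the states
given by `θ`, rewrites to the state `q` using the transition rules `Δ`. -/
inductive ReachesT {F : Type} {ar : F → ℕ} {Q : Type} (Δ : Set (TARule F ar Q))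
    (θ : ℕ → Q) : Term F ar → Q → Prop
  | var (n : ℕ) : ReachesT Δ θ (Term.var n) (θ n)
  | app {f : F} {ts : Fin (ar f) → Term F ar} {qs : Fin (ar f) → Q} {q : Q} :
      (∀ i, ReachesT Δ θ (ts i) (qs i)) → (⟨f, qs, q⟩ : TARule F ar Q) ∈ Δ →
      ReachesT Δ θ (Term.app f ts) q

/-- The language of a tree automaton: all ground terms reaching a final state. -/
def Lang {F : Type} {ar : F → ℕ} {Q : Type} (A : TreeAutomaton F ar Q) :
    Set (Term F ar) :=
  { t | t.Ground ∧ ∃ q ∈ A.final, Reaches A.trans t q }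

/-- A set of ground terms is recognizable if it is the language of some finite
tree automaton. -/
def Recognizable {F : Type} {ar : F → ℕ} (T : Set (Term F ar)) : Prop :=
  ∃ (Q : Type) (_ : Fintype Q) (A : TreeAutomaton F ar Q), T = Lang A

/-- The set of states occurring in a set of transition rules. -/
def statesOf {F : Type} {ar : F → ℕ} {Q : Type} (Γ : Set (TARule F ar Q)) : Set Q :=
  { q | ∃ ρ ∈ Γ, ρ.2.2 = q ∨ ∃ i, ρ.2.1 i = q }

/-! ## The automaton `ℬ(ℛ)` -/

/-- The canonical representative of the state `⟨t⟩` of `ℬ(ℛ)`: all variables are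
identified with the single state `⟨x⟩`, represented by `var 0`. -/
def stPattern {F : Type} {ar : F → ℕ} : Term F ar → Term F ar
  | Term.var _ => Term.var 0
  | Term.app f ts => Term.app f ts

/-- `S_ℛ`: the set of all subterms of arguments of left-hand sides of `ℛ`. -/
def SR {F : Type} {ar : F → ℕ} (R : TRS F ar) : Set (Term F ar) :=
  { s | ∃ lr ∈ R.rules, ∃ (f : F) (ts : Fin (ar f) → Term F ar),
        lr.1 = Term.app f ts ∧ ∃ i, s.IsSubtermOf (ts i) }

/-- The representatives of the states of `ℬ(ℛ)`: the patterns of terms of `S_ℛ`,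
together with `⟨x⟩`. -/
def BStateSet {F : Type} {ar : F → ℕ} (R : TRS F ar) : Set (Term F ar) :=
  stPattern '' SR R ∪ {Term.var 0}

/-- The matching rules of `ℬ(ℛ)` (with states encoded by `enc`):
`f(⟨t₁⟩,…,⟨tₙ⟩) → ⟨t⟩` for every `t = f(t₁,…,tₙ) ∈ S_ℛ`. -/
def BMatch {F : Type} {ar : F → ℕ} {Q : Type} (R : TRS F ar) (enc : Term F ar → Q) :
    Set (TARule F ar Q) :=
  { ρ | ∃ (f : F) (ts : Fin (ar f) → Term F ar), Term.app f ts ∈ SR R ∧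
        ρ = ⟨f, fun i => enc (stPattern (ts i)), enc (Term.app f ts)⟩ }

/-- The propagation rules `f(⟨x⟩,…,⟨x⟩) → ⟨x⟩` for every function symbol `f`. -/
def BProp {F : Type} {ar : F → ℕ} {Q : Type} (enc : Term F ar → Q) :
    Set (TARule F ar Q) :=
  { ρ | ∃ f : F, ρ = ⟨f, fun _ => enc (Term.var 0), enc (Term.var 0)⟩ }

/-- The transition rules of the automaton `ℬ(ℛ)`. -/
def BTrans {F : Type} {ar : F → ℕ} {Q : Type} (R : TRS F ar) (enc : Term F ar → Q) :
    Set (TARule F ar Q) :=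
  BMatch R enc ∪ BProp enc

/-- `Σ(t)`: the set of ground instances of the term `t`. -/
def GInst {F : Type} {ar : F → ℕ} (t : Term F ar) : Set (Term F ar) :=
  { s | s.Ground ∧ ∃ σ, s = t.subst σ }

/-! ## Saturation -/

/-- The state `qᵢ` associated to the argument `lᵢ` of a left-hand side in the
saturation rule: `lᵢθ` if `lᵢ` is a variable occurring in `r` (whose variable set
is `rv`), and `⟨lᵢ⟩` otherwise. -/
def satArg {F : Type} {ar : F → ℕ} {Q : Type} (enc : Term F ar → Q) (θ : ℕ → Q)
    (rv : Finset ℕ) : Term F ar → Q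
  | Term.var n => if n ∈ rv then θ n else enc (Term.var 0)
  | Term.app f ts => enc (Term.app f ts)

/-- One step of the saturation process: add all transition rules `f(q₁,…,qₙ) → q`
obtained from a rewrite rule `f(l₁,…,lₙ) → r` and a state substitution `θ`
(with values among the states `Qc` of the automaton) such that `rθ →_Γ* q`. -/
def satStep {F : Type} {ar : F → ℕ} {Q : Type} (R : TRS F ar) (enc : Term F ar → Q)
    (Qc : Set Q) (Γ : Set (TARule F ar Q)) : Set (TARule F ar Q) :=
  Γ ∪ { ρ | ∃ (f : F) (ls : Fin (ar f) → Term F ar) (r : Term F ar) (θ : ℕ → Q) (q : Q),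
        (Term.app f ls, r) ∈ R.rules ∧ (∀ n ∈ r.vars, θ n ∈ Qc) ∧ ReachesT Γ θ r q ∧
        ρ = ⟨f, fun i => satArg enc θ r.vars (ls i), q⟩ }

/-- The saturated set of transition rules: the closure of `Γ0` under the saturation
inference rule. -/
def satGamma {F : Type} {ar : F → ℕ} {Q : Type} (R : TRS F ar) (enc : Term F ar → Q)
    (Qc : Set Q) (Γ0 : Set (TARule F ar Q)) : Set (TARule F ar Q) :=
  ⋃ n, (satStep R enc Qc)^[n] Γ0

/-! ## The automaton `𝒞_T(ℛ)` and its extension `𝒞'_T(ℛ)` -/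

/-- The data of the construction of the automaton `𝒞_T(ℛ)`: an automaton `𝒜_T`
recognizing `T` with all states accessible and state set `QA`, together with an
encoding `enc` of the states `⟨t⟩` of `ℬ(ℛ)` into the common state type `Q`, such
that every state common to `𝒜_T` and `ℬ(ℛ)` accepts the same set of terms in both
automata. -/
structure CSetup {G : Type} [Fintype G] {arG : G → ℕ} (Q : Type) [Fintype Q]
    (Rg : TRS G arG) (T : Set (Term G arG)) where
  enc : Term G arG → Q
  A : TreeAutomaton G arG Q
  QA : Set Q
  henc : Set.InjOn enc (BStateSet Rg)
  hAstates : ∀ ρ ∈ A.trans, ρ.2.2 ∈ QA ∧ ∀ i, ρ.2.1 i ∈ QA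
  hfinal : A.final ⊆ QA
  hacc : ∀ q ∈ QA, ∃ s : Term G arG, s.Ground ∧ Reaches A.trans s q
  hground : ∃ s : Term G arG, s.Ground
  hshared : ∀ q ∈ QA ∩ enc '' BStateSet Rg, ∀ s : Term G arG,
      Reaches A.trans s q ↔ Reaches (BTrans Rg enc) s q
  hT : T = Lang A

namespace CSetup

variable {G : Type} [Fintype G] {arG : G → ℕ} {Q : Type} [Fintype Q]
  {Rg : TRS G arG} {T : Set (Term G arG)}

/-- The set of states of the automaton `𝒞_T(ℛ)`. -/
def Qstates (C : CSetup Q Rg T) : Set Q := C.QA ∪ C.enc '' BStateSet Rg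

/-- The transition rules of `𝒞_T(ℛ)` before saturation: the union of `𝒜_T` and `ℬ(ℛ)`. -/
def Γ0 (C : CSetup Q Rg T) : Set (TARule G arG Q) := C.A.trans ∪ BTrans Rg C.enc

/-- The transition rules of `𝒞_T(ℛ)` after saturation. -/
def Γsat (C : CSetup Q Rg T) : Set (TARule G arG Q) :=
  satGamma Rg C.enc C.Qstates C.Γ0

end CSetup

/-- The redex rules `f(⟪l₁⟫,…,⟪lₙ⟫) → q_r` for every left-hand side `f(l₁,…,lₙ)`. -/
def RedexRules {F : Type} {ar : F → ℕ} {Q : Type} (R : TRS F ar)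
    (enc2 : Term F ar → Q) (qr : Q) : Set (TARule F ar Q) :=
  { ρ | ∃ (f : F) (ls : Fin (ar f) → Term F ar) (r : Term F ar),
        (Term.app f ls, r) ∈ R.rules ∧
        ρ = ⟨f, fun i => enc2 (stPattern (ls i)), qr⟩ }

/-- The rules `f(⟨x⟩,…,q_r,…,⟨x⟩) → q_r`. -/
def QrProp {F : Type} {ar : F → ℕ} {Q : Type} (enc : Term F ar → Q) (qr : Q) :
    Set (TARule F ar Q) :=
  { ρ | ∃ (f : F) (j : Fin (ar f)),
        ρ = ⟨f, fun i => if i = j then qr else enc (Term.var 0), qr⟩ }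

/-- The data of the construction of the automaton `𝒞'_T(ℛ)`: `𝒞_T(ℛ)` extended with
a fresh copy `⟪t⟫` (encoded by `enc2`, with `⟪x⟫ = ⟨x⟩`) of the states of `ℬ(ℛ)` and
a fresh state `q_r`. -/
structure CpSetup {G : Type} [Fintype G] {arG : G → ℕ} (Q : Type) [Fintype Q]
    (Rg : TRS G arG) (T : Set (Term G arG)) extends CSetup Q Rg T where
  enc2 : Term G arG → Q
  qr : Q
  henc2 : Set.InjOn enc2 (BStateSet Rg)
  hx : enc2 (Term.var 0) = enc (Term.var 0)
  hfresh : (enc2 '' (BStateSet Rg \ {Term.var 0}) ∪ {qr}) ∩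
              (QA ∪ enc '' BStateSet Rg) = ∅
  hqr : qr ∉ enc2 '' (BStateSet Rg \ {Term.var 0})

namespace CpSetup

variable {G : Type} [Fintype G] {arG : G → ℕ} {Q : Type} [Fintype Q]
  {Rg : TRS G arG} {T : Set (Term G arG)}

/-- The transition rules `Γ'` of the automaton `𝒞'_T(ℛ)`. -/
def Γ' (C : CpSetup Q Rg T) : Set (TARule G arG Q) :=
  C.toCSetup.Γsat ∪ BMatch Rg C.enc2 ∪ RedexRules Rg C.enc2 C.qr ∪ QrProp C.enc C.qr

end CpSetup

/-! ## The signature `𝓖 = 𝓕 ∪ {•}` -/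

/-- The arity function of the extended signature `𝓕 ∪ {•}` (with `•` the fresh
constant `none`). -/
def arB {F : Type} (ar : F → ℕ) : Option F → ℕ
  | none => 0
  | some f => ar f

/-- The term `•`. -/
def bulletTm {F : Type} {ar : F → ℕ} : Term (Option F) (arB ar) :=
  Term.app none Fin.elim0

/-- The embedding of `𝒯(𝓕)`-terms into terms over `𝓕 ∪ {•}`. -/
def liftB {F : Type} {ar : F → ℕ} : Term F ar → Term (Option F) (arB ar) :=
  Term.relabel some (fun _ => rfl)

/-- A TRS over `𝓕` viewed as a TRS over `𝓕 ∪ {•}`. -/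
def TRS.liftB {F : Type} {ar : F → ℕ} (R : TRS F ar) : TRS (Option F) (arB ar) :=
  R.relabel some (fun _ => rfl)

/-- The TRS `ℛ• = ℛ ∪ {• → •}` over the signature `𝓕 ∪ {•}`. -/
def TRS.bullet {F : Type} {ar : F → ℕ} (R : TRS F ar) : TRS (Option F) (arB ar) where
  rules := R.liftB.rules ∪ {(bulletTm, bulletTm)}
  finite := R.liftB.finite.union (Set.finite_singleton _)
  lhs_not_var := by
    rintro lr (h | h) n hn
    · exact R.liftB.lhs_not_var lr h n hn
    · rw [Set.mem_singleton_iff] at h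
      rw [h] at hn
      cases hn

/-! ## The automaton `𝒟(ℛ)` -/

/-- For a symbol `g` and sets of states `Ss` for the arguments, the set
`g(S₁,…,Sₙ)↓` of states reachable from `g` applied to states chosen from the `Ssᵢ`. -/
def oneStep {G : Type} {arG : G → ℕ} {Q : Type} (Γ : Set (TARule G arG Q)) (g : G)
    (Ss : Fin (arG g) → Set Q) : Set Q :=
  { q | ∃ qs : Fin (arG g) → Q, (∀ i, qs i ∈ Ss i) ∧ (⟨g, qs, q⟩ : TARule G arG Q) ∈ Γ }

/-- `t↓` for a ground term `t`: the set of states reachable from `t`. -/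
def dn {G : Type} {arG : G → ℕ} {Q : Type} (Γ : Set (TARule G arG Q))
    (t : Term G arG) : Set Q :=
  { q | Reaches Γ t q }

/-- There is a rewrite rule with left-hand side `g(l₁,…,lₙ)` such that
`⟪lᵢ⟫ ∈ Ssᵢ` for all `i`. -/
def LhsMatch {G : Type} {arG : G → ℕ} {Q : Type} (Rg : TRS G arG)
    (enc2 : Term G arG → Q) (g : G) (Ss : Fin (arG g) → Set Q) : Prop :=
  ∃ (ls : Fin (arG g) → Term G arG) (r : Term G arG),
    (Term.app g ls, r) ∈ Rg.rules ∧ ∀ i, enc2 (stPattern (ls i)) ∈ Ss i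

/-- The transition rules of the automaton `𝒟(ℛ)` over `𝓕`, built from the transition
rules `Γ'` of `𝒞'_{NF}(ℛ)` over `𝓕 ∪ {•}`. -/
def DTrans {F : Type} {ar : F → ℕ} {Q : Type} (Rb : TRS (Option F) (arB ar))
    (Γ' : Set (TARule (Option F) (arB ar) Q))
    (enc enc2 : Term (Option F) (arB ar) → Q) :
    Set (TARule F ar (Set Q × Set Q)) :=
  { ρ | ∃ (f : F) (SP : Fin (ar f) → Set Q × Set Q) (P1 P2 : Set Q),
      P1 ⊆ (⋃ i : Fin (ar f), oneStep Γ' (some f)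
              (fun j => @ite _ (j = i) (instDecidableEqFin _ j i) (SP j).2 (SP j).1)) ∧
      (∀ (i : Fin (ar f)), ∀ q ∈ (SP i).2,
        (P1 ∩ oneStep Γ' (some f) (fun j => @ite _ (j = i) (instDecidableEqFin _ j i) {q} (SP j).1)).Nonempty) ∧
      ((LhsMatch Rb enc2 (some f) (fun i => (SP i).1) ∧ P2 = {enc (Term.var 0)}) ∨
       (¬ LhsMatch Rb enc2 (some f) (fun i => (SP i).1) ∧ P2 = (∅ : Set Q))) ∧
      ρ = ⟨f, SP, (oneStep Γ' (some f) (fun i => (SP i).1), P1 ∪ P2)⟩ }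

/-- The automaton `𝒟(ℛ)`: final states are the pairs `[S,P]` with `q_r ∈ S` and
`P ⊆ Q_f`. -/
def DAutomaton {F : Type} {ar : F → ℕ} {Q : Type} (Rb : TRS (Option F) (arB ar))
    (Γ' : Set (TARule (Option F) (arB ar) Q))
    (enc enc2 : Term (Option F) (arB ar) → Q) (qr : Q) (Qf : Set Q) :
    TreeAutomaton F ar (Set Q × Set Q) where
  trans := DTrans Rb Γ' enc enc2
  final := { SP | qr ∈ SP.1 ∧ SP.2 ⊆ Qf }

/-! ## Growing approximations -/

/-- `VarRepl t t'` : `t'` is obtained from `t` by replacing occurrences of variables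
by (possibly other) variables. -/
inductive VarRepl {F : Type} {ar : F → ℕ} : Term F ar → Term F ar → Prop
  | var (n m : ℕ) : VarRepl (Term.var n) (Term.var m)
  | app (f : F) (ts ts' : Fin (ar f) → Term F ar) :
      (∀ i, VarRepl (ts i) (ts' i)) → VarRepl (Term.app f ts) (Term.app f ts')

/-- `Rg` is a growing approximation of `R`: a right-linear growing TRS obtained from
`R` by replacing, in each right-hand side, occurrences of variables by variables not
occurring in the corresponding left-hand side. -/
def IsGrowingApprox {F : Type} {ar : F → ℕ} (R Rg : TRS F ar) : Prop :=
  Rg.RightLinear ∧ Rg.Growing ∧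
  (∀ lr ∈ Rg.rules, ∃ lr' ∈ R.rules, lr.1 = lr'.1 ∧ VarRepl lr'.2 lr.2 ∧
      ∀ n ∈ lr.2.vars, n ∉ lr.1.vars) ∧
  (∀ lr ∈ R.rules, ∃ lr' ∈ Rg.rules, lr.1 = lr'.1 ∧ VarRepl lr.2 lr'.2 ∧
      ∀ n ∈ lr'.2.vars, n ∉ lr'.1.vars)

/-! ## The signature `𝓖 = 𝓕 ∪ {f° : f ∈ 𝓕}` -/

/-- The arity function of the signature `𝓕 ∪ {f° : f ∈ 𝓕}` (`inl f` is `f`,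
`inr f` is `f°`). -/
def arC {F : Type} (ar : F → ℕ) : F ⊕ F → ℕ
  | Sum.inl f => ar f
  | Sum.inr f => ar f

/-- The embedding of `𝒯(𝓕)`-terms into terms over `𝓕 ∪ {f° : f ∈ 𝓕}`. -/
def liftC {F : Type} {ar : F → ℕ} : Term F ar → Term (F ⊕ F) (arC ar) :=
  Term.relabel Sum.inl (fun _ => rfl)

/-- `t°`: mark the root symbol of `t`. -/
def circTm {F : Type} {ar : F → ℕ} : Term F ar → Term (F ⊕ F) (arC ar)
  | Term.var n => Term.var n
  | Term.app f ts => Term.app (Sum.inr f) fun i => liftC (ts i)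

/-- A TRS over `𝓕` viewed as a TRS over `𝓕 ∪ {f° : f ∈ 𝓕}`. -/
def TRS.liftC {F : Type} {ar : F → ℕ} (R : TRS F ar) : TRS (F ⊕ F) (arC ar) :=
  R.relabel Sum.inl (fun _ => rfl)

/-- The TRS `𝒮° = 𝒮 ∪ {l° → r | l → r ∈ 𝒮}` over the signature `𝓕 ∪ {f° : f ∈ 𝓕}`. -/
def TRS.circ {F : Type} {ar : F → ℕ} (S : TRS F ar) : TRS (F ⊕ F) (arC ar) where
  rules := S.liftC.rules ∪ (fun lr => (circTm lr.1, _root_.liftC lr.2)) '' S.rules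
  finite := S.liftC.finite.union (S.finite.image _)
  lhs_not_var := by
    rintro lr (h | ⟨lr0, h0, rfl⟩) n hn
    · exact S.liftC.lhs_not_var lr h n hn
    · dsimp only at hn
      cases h1 : lr0.1 with
      | var m => exact absurd h1 (S.lhs_not_var lr0 h0 m)
      | app f ts =>
          rw [h1] at hn
          simp only [circTm] at hn
          cases hn

/-- The transitions added to `ℬ(𝒮°)` to obtain `𝒜_{REDEX_{𝒮°}}`:
`f(⟨l₁⟩,…,⟨lₙ⟩) → q_f` and `f°(⟨l₁⟩,…,⟨lₙ⟩) → q_f` for each left-hand side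
`f(l₁,…,lₙ)` of a rule of `𝒮`. -/
def CircRedexRules {F : Type} {ar : F → ℕ} {Q : Type} (S : TRS F ar)
    (enc : Term (F ⊕ F) (arC ar) → Q) (qf : Q) : Set (TARule (F ⊕ F) (arC ar) Q) :=
  { ρ | ∃ (f : F) (ls : Fin (ar f) → Term F ar) (r : Term F ar),
      (Term.app f ls, r) ∈ S.rules ∧
      (ρ = ⟨Sum.inl f, fun i => enc (stPattern (liftC (ls i))), qf⟩ ∨
       ρ = ⟨Sum.inr f, fun i => enc (stPattern (liftC (ls i))), qf⟩) }

/-! ## The automaton `𝒟'(ℛ,𝒮)` -/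

/-- The data of the construction of `𝒞'_{RS_{𝒮°}}(ℛ)`: the saturated automaton
`𝒞_{RS_{𝒮°}}(ℛ)`, a fresh copy `⟪t⟫` (encoded by `enc2`, with `⟪x⟫ = ⟨x⟩`) of the
states of `ℬ(ℛ)`, and an automaton `𝒞_{REDEX_𝒮}(𝒮)` (transitions `Etrans`, final
states `Qf'`) recognizing the non-`𝒮`-root-stable ground terms of `𝒯(𝓕)`. -/
structure CrsSetup {F : Type} [Fintype F] {ar : F → ℕ} (Q : Type) [Fintype Q]
    (R S : TRS F ar) extends CSetup Q R.liftC (TRS.RSset S.circ) where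
  enc2 : Term (F ⊕ F) (arC ar) → Q
  henc2 : Set.InjOn enc2 (BStateSet R.liftC)
  hx : enc2 (Term.var 0) = enc (Term.var 0)
  hfresh2 : (enc2 '' (BStateSet R.liftC \ {Term.var 0})) ∩
              (QA ∪ enc '' BStateSet R.liftC) = ∅
  Etrans : Set (TARule (F ⊕ F) (arC ar) Q)
  Qf' : Set Q
  hQf' : Qf' ⊆ statesOf Etrans
  hEfresh : statesOf Etrans ∩
      (QA ∪ enc '' BStateSet R.liftC ∪ enc2 '' (BStateSet R.liftC \ {Term.var 0})) = ∅
  hE : ∀ t : Term (F ⊕ F) (arC ar),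
      (t.Ground ∧ ∃ q ∈ Qf', Reaches Etrans t q) ↔
      (∃ s : Term F ar, t = liftC s ∧ s.Ground ∧ ¬ S.RootStable s)

namespace CrsSetup

variable {F : Type} [Fintype F] {ar : F → ℕ} {Q : Type} [Fintype Q] {R S : TRS F ar}

/-- The transition rules `Γ'` of the automaton `𝒞'_{RS_{𝒮°}}(ℛ)`. -/
def Γ' (C : CrsSetup Q R S) : Set (TARule (F ⊕ F) (arC ar) Q) :=
  C.toCSetup.Γsat ∪ BMatch R.liftC C.enc2 ∪ C.Etrans

end CrsSetup

/-- The transition rules of the automaton `𝒟'(ℛ,𝒮)` over `𝓕`, built from the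
transition rules `Γ'` of `𝒞'_{RS_{𝒮°}}(ℛ)`. -/
def DTransRS {F : Type} {ar : F → ℕ} {Q : Type} (Rg : TRS (F ⊕ F) (arC ar))
    (Γ' : Set (TARule (F ⊕ F) (arC ar) Q)) (enc2 : Term (F ⊕ F) (arC ar) → Q) :
    Set (TARule F ar (Set Q × Set Q)) :=
  { ρ | ∃ (f : F) (SP : Fin (ar f) → Set Q × Set Q) (P1 P2 : Set Q),
      P1 ⊆ (⋃ i : Fin (ar f), oneStep Γ' (Sum.inl f)
              (fun j => @ite _ (j = i) (instDecidableEqFin _ j i) (SP j).2 (SP j).1)) ∧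
      (∀ (i : Fin (ar f)), ∀ q ∈ (SP i).2,
        (P1 ∩ oneStep Γ' (Sum.inl f) (fun j => @ite _ (j = i) (instDecidableEqFin _ j i) {q} (SP j).1)).Nonempty) ∧
      ((LhsMatch Rg enc2 (Sum.inl f) (fun i => (SP i).1) ∧ P2.Nonempty ∧
          P2 ⊆ oneStep Γ' (Sum.inr f) (fun i => (SP i).1)) ∨
       (¬ LhsMatch Rg enc2 (Sum.inl f) (fun i => (SP i).1) ∧ P2 = (∅ : Set Q))) ∧
      ρ = ⟨f, SP, (oneStep Γ' (Sum.inl f) (fun i => (SP i).1), P1 ∪ P2)⟩ }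

/-- The automaton `𝒟'(ℛ,𝒮)`: final states are the pairs `[S,P]` with
`S ∩ Q_f' ≠ ∅` and `P ⊆ Q_f`. -/
def DAutomatonRS {F : Type} {ar : F → ℕ} {Q : Type} (Rg : TRS (F ⊕ F) (arC ar))
    (Γ' : Set (TARule (F ⊕ F) (arC ar) Q)) (enc2 : Term (F ⊕ F) (arC ar) → Q)
    (Qf' Qf : Set Q) : TreeAutomaton F ar (Set Q × Set Q) where
  trans := DTransRS Rg Γ' enc2
  final := { SP | (SP.1 ∩ Qf').Nonempty ∧ SP.2 ⊆ Qf }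

/-! ### Auxiliary lemmas -/

section Basic

open Term

variable {F : Type} {ar : F → ℕ}

lemma Term.one_le_count_of_mem_vars {t : Term F ar} {n : ℕ} (h : n ∈ t.vars) :
    1 ≤ t.count n := by
  induction t with
  | var m =>
      simp only [Term.vars, Finset.mem_singleton] at h
      simp [Term.count, h]
  | app f ts ih =>
      simp only [Term.vars, Finset.mem_biUnion, Finset.mem_univ, true_and] at h
      obtain ⟨i, hi⟩ := h
      calc 1 ≤ (ts i).count n := ih i hi
        _ ≤ _ := Finset.single_le_sum (f := fun j => (ts j).count n)
          (fun _ _ => Nat.zero_le _) (Finset.mem_univ i)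

lemma Term.mem_vars_of_one_le_count {t : Term F ar} {n : ℕ} (h : 1 ≤ t.count n) :
    n ∈ t.vars := by
  induction t with
  | var m =>
      simp only [Term.count] at h
      split at h
      · simp [Term.vars]; omega
      · omega
  | app f ts ih =>
      simp only [Term.count] at h
      have : ∃ i, 1 ≤ (ts i).count n := by
        by_contra hc
        push_neg at hc
        have : ∀ i ∈ Finset.univ, (ts i).count n = 0 := fun i _ => by have := hc i; omega
        rw [Finset.sum_eq_zero this] at h; omega
      obtain ⟨i, hi⟩ := this
      simp only [Term.vars, Finset.mem_biUnion, Finset.mem_univ, true_and]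
      exact ⟨i, ih i hi⟩

lemma Term.mem_vars_iff_count {t : Term F ar} {n : ℕ} : n ∈ t.vars ↔ 1 ≤ t.count n :=
  ⟨Term.one_le_count_of_mem_vars, Term.mem_vars_of_one_le_count⟩

lemma Term.linear_app_child {f : F} {ts : Fin (ar f) → Term F ar}
    (h : (Term.app f ts).Linear) (i : Fin (ar f)) : (ts i).Linear := by
  intro n
  have hh := h n
  simp only [Term.count] at hh
  refine le_trans ?_ hh
  exact Finset.single_le_sum (f := fun j => (ts j).count n)
    (fun _ _ => Nat.zero_le _) (Finset.mem_univ i)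

lemma Term.linear_app_disjoint {f : F} {ts : Fin (ar f) → Term F ar}
    (h : (Term.app f ts).Linear) {n : ℕ} {i j : Fin (ar f)}
    (hi : n ∈ (ts i).vars) (hj : n ∈ (ts j).vars) : i = j := by
  by_contra hij
  have hcount := h n
  simp only [Term.count] at hcount
  have h2 : ({i, j} : Finset (Fin (ar f))).sum (fun k => (ts k).count n) ≤
      Finset.univ.sum (fun k => (ts k).count n) :=
    Finset.sum_le_sum_of_subset (Finset.subset_univ _)
  rw [Finset.sum_pair hij] at h2
  have := Term.one_le_count_of_mem_vars hi
  have := Term.one_le_count_of_mem_vars hj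
  omega

lemma Term.subst_congr {t : Term F ar} {σ σ' : ℕ → Term F ar}
    (h : ∀ n ∈ t.vars, σ n = σ' n) : t.subst σ = t.subst σ' := by
  induction t with
  | var n => exact h n (by simp [Term.vars])
  | app f ts ih =>
      simp only [Term.subst]
      congr 1
      funext i
      exact ih i (fun n hn => h n (by
        simp only [Term.vars, Finset.mem_biUnion, Finset.mem_univ, true_and]
        exact ⟨i, hn⟩))

lemma Term.ground_app {f : F} {ts : Fin (ar f) → Term F ar} :
    (Term.app f ts).Ground ↔ ∀ i, (ts i).Ground := by
  simp only [Term.Ground, Term.vars]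
  constructor
  · intro h i
    ext n
    simp only [Finset.notMem_empty, iff_false]
    intro hn
    have : n ∈ (Finset.univ.biUnion fun i => (ts i).vars) := by
      simp only [Finset.mem_biUnion, Finset.mem_univ, true_and]; exact ⟨i, hn⟩
    rw [h] at this
    exact absurd this (Finset.notMem_empty n)
  · intro h
    ext n
    simp only [Finset.mem_biUnion, Finset.mem_univ, true_and, Finset.notMem_empty, iff_false]
    rintro ⟨i, hi⟩
    rw [h i] at hi
    exact absurd hi (Finset.notMem_empty n)

lemma Term.not_ground_var (n : ℕ) : ¬ (Term.var n : Term F ar).Ground := by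
  simp [Term.Ground, Term.vars]

lemma Term.ground_subst {t : Term F ar} {σ : ℕ → Term F ar}
    (h : ∀ n ∈ t.vars, (σ n).Ground) : (t.subst σ).Ground := by
  induction t with
  | var n => exact h n (by simp [Term.vars])
  | app f ts ih =>
      simp only [Term.subst]
      rw [Term.ground_app]
      intro i
      exact ih i (fun n hn => h n (by
        simp only [Term.vars, Finset.mem_biUnion, Finset.mem_univ, true_and]
        exact ⟨i, hn⟩))

/-! ### subtermAt / replaceAt lemmas -/

lemma Term.subtermAt_append (t : Term F ar) (p q : List ℕ) :
    t.subtermAt (p ++ q) = (t.subtermAt p).bind (fun v => v.subtermAt q) := by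
  induction p generalizing t with
  | nil => simp [Term.subtermAt]
  | cons i p ih =>
      cases t with
      | var n => simp [Term.subtermAt]
      | app f ts =>
          simp only [List.cons_append, Term.subtermAt]
          split
          · exact ih _
          · simp

lemma Term.exists_replaceAt {t v : Term F ar} {p : List ℕ}
    (hp : t.subtermAt p = some v) (u : Term F ar) : ∃ w, t.replaceAt p u = some w := by
  induction p generalizing t with
  | nil => exact ⟨u, by simp [Term.replaceAt]⟩
  | cons i p ih =>
      cases t with
      | var n => simp [Term.subtermAt] at hp
      | app f ts =>
          simp only [Term.subtermAt] at hp
          split at hp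
          · obtain ⟨w, hw⟩ := ih hp
            refine ⟨Term.app f (Function.update ts ⟨i, ‹_›⟩ w), ?_⟩
            simp only [Term.replaceAt]
            rw [dif_pos ‹_›, hw]
            rfl
          · exact absurd hp (by simp)

lemma Term.replaceAt_self {t v : Term F ar} {p : List ℕ}
    (hp : t.subtermAt p = some v) : t.replaceAt p v = some t := by
  induction p generalizing t with
  | nil =>
      simp only [Term.subtermAt] at hp
      cases hp
      simp [Term.replaceAt]
  | cons i p ih =>
      cases t with
      | var n => simp [Term.subtermAt] at hp
      | app f ts =>
          simp only [Term.subtermAt] at hp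
          split at hp
          · simp only [Term.replaceAt]
            rw [dif_pos ‹_›, ih hp]
            simp [Function.update_eq_self]
          · exact absurd hp (by simp)

lemma Term.subtermAt_replaceAt {t v w : Term F ar} {p : List ℕ}
    (h : t.replaceAt p v = some w) : w.subtermAt p = some v := by
  induction p generalizing t w with
  | nil =>
      simp only [Term.replaceAt] at h
      cases h
      simp [Term.subtermAt]
  | cons i p ih =>
      cases t with
      | var n => simp [Term.replaceAt] at h
      | app f ts =>
          simp only [Term.replaceAt] at h
          split at h
          · rw [Option.map_eq_some_iff] at h
            obtain ⟨s, hs, rfl⟩ := h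
            simp only [Term.subtermAt]
            rw [dif_pos ‹_›, Function.update_self]
            exact ih hs
          · exact absurd h (by simp)

lemma Term.replaceAt_comp {t v v' w u : Term F ar} {p q : List ℕ}
    (hp : t.subtermAt p = some v) (hq : v.replaceAt q u = some v')
    (hr : t.replaceAt p v' = some w) : t.replaceAt (p ++ q) u = some w := by
  induction p generalizing t w with
  | nil =>
      simp only [Term.subtermAt] at hp
      simp only [Term.replaceAt] at hr
      cases hp; cases hr
      exact hq
  | cons i p ih =>
      cases t with
      | var n => simp [Term.subtermAt] at hp
      | app f ts =>
          simp only [Term.subtermAt] at hp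
          simp only [Term.replaceAt] at hr ⊢
          split at hp
          · simp only [List.cons_append, Term.replaceAt, dif_pos (‹i < ar f› : i < ar f)] at hr ⊢
            rw [Option.map_eq_some_iff] at hr
            obtain ⟨s, hs, rfl⟩ := hr
            rw [Option.map_eq_some_iff]
            exact ⟨s, ih hp hs, rfl⟩
          · exact absurd hp (by simp)

lemma Term.ground_subtermAt {t v : Term F ar} {p : List ℕ}
    (hg : t.Ground) (hp : t.subtermAt p = some v) : v.Ground := by
  induction p generalizing t with
  | nil => simp only [Term.subtermAt] at hp; cases hp; exact hg
  | cons i p ih =>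
      cases t with
      | var n => simp [Term.subtermAt] at hp
      | app f ts =>
          simp only [Term.subtermAt] at hp
          split at hp
          · exact ih (Term.ground_app.mp hg _) hp
          · exact absurd hp (by simp)

lemma Term.ground_replaceAt {t v w : Term F ar} {p : List ℕ}
    (hg : t.Ground) (hv : v.Ground) (h : t.replaceAt p v = some w) : w.Ground := by
  induction p generalizing t w with
  | nil => simp only [Term.replaceAt] at h; cases h; exact hv
  | cons i p ih =>
      cases t with
      | var n => simp [Term.replaceAt] at h
      | app f ts =>
          simp only [Term.replaceAt] at h
          split at h
          · rw [Option.map_eq_some_iff] at h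
            obtain ⟨s, hs, rfl⟩ := h
            rw [Term.ground_app]
            intro j
            rcases eq_or_ne j ⟨_, ‹_›⟩ with rfl | hne
            · rw [Function.update_self]
              exact ih (Term.ground_app.mp hg _) hs
            · rw [Function.update_of_ne hne]
              exact Term.ground_app.mp hg _
          · exact absurd h (by simp)

lemma Term.count_subtermAt_le {t v : Term F ar} {p : List ℕ} {n : ℕ}
    (hp : t.subtermAt p = some v) : v.count n ≤ t.count n := by
  induction p generalizing t with
  | nil => simp only [Term.subtermAt] at hp; cases hp; exact le_rfl
  | cons i p ih =>
      cases t with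
      | var m => simp [Term.subtermAt] at hp
      | app f ts =>
          simp only [Term.subtermAt] at hp
          split at hp
          · calc v.count n ≤ _ := ih hp
              _ ≤ (Term.app f ts).count n := by
                simp only [Term.count]
                exact Finset.single_le_sum (f := fun j => (ts j).count n)
                  (fun _ _ => Nat.zero_le _) (Finset.mem_univ _)
          · exact absurd hp (by simp)

lemma Term.linear_subtermAt {t v : Term F ar} {p : List ℕ}
    (hl : t.Linear) (hp : t.subtermAt p = some v) : v.Linear :=
  fun n => le_trans (Term.count_subtermAt_le hp) (hl n)

end Basic
section Relabel

open Term

variable {F : Type} {ar : F → ℕ} {G : Type} {arG : G → ℕ}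

lemma Term.count_relabel (φ : F → G) (h : ∀ f, arG (φ f) = ar f) (t : Term F ar) (n : ℕ) :
    (t.relabel φ h).count n = t.count n := by
  induction t with
  | var m => rfl
  | app f ts ih =>
      simp only [Term.relabel, Term.count]
      exact Fintype.sum_equiv (finCongr (h f))
        (fun i => ((ts (Fin.cast (h f) i)).relabel φ h).count n)
        (fun j => (ts j).count n) (fun i => ih _)

lemma Term.vars_relabel (φ : F → G) (h : ∀ f, arG (φ f) = ar f) (t : Term F ar) :
    (t.relabel φ h).vars = t.vars := by
  ext n
  simp only [Term.mem_vars_iff_count, Term.count_relabel]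

lemma Term.linear_relabel (φ : F → G) (h : ∀ f, arG (φ f) = ar f) {t : Term F ar}
    (hl : t.Linear) : (t.relabel φ h).Linear := by
  intro n; rw [Term.count_relabel]; exact hl n

lemma Term.ground_relabel (φ : F → G) (h : ∀ f, arG (φ f) = ar f) {t : Term F ar}
    (hg : t.Ground) : (t.relabel φ h).Ground := by
  unfold Term.Ground
  rw [Term.vars_relabel]; exact hg

lemma Term.subst_relabel (φ : F → G) (h : ∀ f, arG (φ f) = ar f) (t : Term F ar)
    (σ : ℕ → Term F ar) :
    (t.subst σ).relabel φ h = (t.relabel φ h).subst (fun n => (σ n).relabel φ h) := by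
  induction t with
  | var n => rfl
  | app f ts ih =>
      simp only [Term.subst, Term.relabel]
      congr 1
      funext i
      exact ih _

end Relabel

section LiftB

open Term

variable {F : Type} {ar : F → ℕ}

lemma liftB_app (f : F) (ts : Fin (ar f) → Term F ar) :
    liftB (Term.app f ts) = Term.app (some f) (fun i => liftB (ts i)) := by
  simp only [liftB, Term.relabel]
  congr 1

lemma liftB_var (n : ℕ) : (liftB (Term.var n) : Term (Option F) (arB ar)) = Term.var n := rfl

lemma liftB_ground {t : Term F ar} (h : t.Ground) : (liftB t).Ground :=
  Term.ground_relabel _ _ h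

lemma liftB_linear {t : Term F ar} (h : t.Linear) : (liftB t).Linear :=
  Term.linear_relabel _ _ h

lemma liftB_vars (t : Term F ar) : (liftB t).vars = t.vars := Term.vars_relabel _ _ t

lemma liftB_subst (t : Term F ar) (σ : ℕ → Term F ar) :
    liftB (t.subst σ) = (liftB t).subst (fun n => liftB (σ n)) :=
  Term.subst_relabel _ _ t σ

lemma liftB_ne_bullet (t : Term F ar) : liftB t ≠ bulletTm := by
  cases t with
  | var n => simp [liftB, Term.relabel, bulletTm]
  | app f ts =>
      rw [liftB_app]
      intro h
      have := congrArg (fun t => match t with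
        | Term.app f _ => (f : Option F)
        | Term.var _ => none) h
      simp [bulletTm] at this

/-- Terms of the form `liftB s` are exactly characterized for ground normal forms. -/
lemma exists_of_liftB_subst {l : Term F ar} (hl : l.Linear) :
    ∀ (u : Term F ar) (τ : ℕ → Term (Option F) (arB ar)),
      liftB u = (liftB l).subst τ → ∃ σ : ℕ → Term F ar, u = l.subst σ := by
  induction l with
  | var n => exact fun u τ _ => ⟨fun _ => u, rfl⟩
  | app f ls ih =>
      intro u τ hu
      cases u with
      | var m =>
          rw [liftB_app] at hu
          exact absurd hu (by simp [liftB_var, Term.subst])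
      | app g us =>
          rw [liftB_app, liftB_app] at hu
          simp only [Term.subst] at hu
          have hfg : (some g : Option F) = some f := by
            have := congrArg (fun t => match t with
              | Term.app f _ => (f : Option F)
              | Term.var _ => none) hu
            simpa using this
          obtain rfl : g = f := by injection hfg
          have hargs : (fun i => liftB (us i)) = fun i => (liftB (ls i)).subst τ := by
            have h2 := hu
            rw [Term.app.injEq] at h2
            exact eq_of_heq h2.2
          have hch : ∀ i, ∃ σ : ℕ → Term F ar, us i = (ls i).subst σ := by
            intro i
            exact ih i (Term.linear_app_child hl i) (us i) τ (congrFun hargs i)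
          -- combine
          classical
          choose σs hσs using hch
          refine ⟨fun m => if hm : ∃ i, m ∈ (ls i).vars then σs hm.choose m else Term.var m, ?_⟩
          simp only [Term.subst]
          congr 1
          funext i
          rw [hσs i]
          apply Term.subst_congr
          intro m hm
          have hex : ∃ j, m ∈ (ls j).vars := ⟨i, hm⟩
          rw [dif_pos hex]
          have : hex.choose = i := Term.linear_app_disjoint hl hex.choose_spec hm
          rw [this]

lemma exists_subst_combine {f : F} {ls : Fin (ar f) → Term F ar}
    (hl : (Term.app f ls).Linear) (u : Fin (ar f) → Term F ar)
    (h : ∀ i, ∃ σ, u i = (ls i).subst σ) : ∃ σ, ∀ i, u i = (ls i).subst σ := by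
  classical
  choose σs hσs using h
  refine ⟨fun m => if hm : ∃ i, m ∈ (ls i).vars then σs hm.choose m else Term.var m, ?_⟩
  intro i
  rw [hσs i]
  apply Term.subst_congr
  intro m hm
  have hex : ∃ j, m ∈ (ls j).vars := ⟨i, hm⟩
  rw [dif_pos hex]
  have : hex.choose = i := Term.linear_app_disjoint hl hex.choose_spec hm
  rw [this]

lemma subtermAt_liftB (s : Term F ar) (p : List ℕ) :
    (liftB s).subtermAt p = (s.subtermAt p).map liftB := by
  induction p generalizing s with
  | nil => simp [Term.subtermAt]
  | cons i p ih =>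
      cases s with
      | var n => simp [liftB_var, Term.subtermAt]
      | app f ts =>
          rw [liftB_app]
          show (if h : i < ar f then (liftB (ts ⟨i, h⟩)).subtermAt p else none) = _
          by_cases hi : i < ar f
          · rw [dif_pos hi]
            show _ = Option.map liftB (if h : i < ar f then (ts ⟨i, h⟩).subtermAt p else none)
            rw [dif_pos hi]
            exact ih _
          · rw [dif_neg hi]
            show _ = Option.map liftB (if h : i < ar f then (ts ⟨i, h⟩).subtermAt p else none)
            rw [dif_neg hi]
            rfl

end LiftB

section RewritingLemmas

open Term

variable {F : Type} {ar : F → ℕ} {R : Set (Term F ar × Term F ar)}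

lemma Term.replaceAt_replaceAt {t v w c w' : Term F ar} {p : List ℕ}
    (h1 : t.replaceAt p v = some w) (h2 : w.replaceAt p c = some w') :
    t.replaceAt p c = some w' := by
  induction p generalizing t w w' with
  | nil =>
      simp only [Term.replaceAt] at h1 h2 ⊢
      cases h1; exact h2
  | cons i p ih =>
      cases t with
      | var n => simp [Term.replaceAt] at h1
      | app f ts =>
          simp only [Term.replaceAt] at h1
          split at h1
          · rw [Option.map_eq_some_iff] at h1
            obtain ⟨s, hs, rfl⟩ := h1
            simp only [Term.replaceAt] at h2
            rw [dif_pos ‹_›] at h2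
            rw [Option.map_eq_some_iff] at h2
            obtain ⟨s', hs', rfl⟩ := h2
            rw [Function.update_self] at hs'
            simp only [Term.replaceAt]
            rw [dif_pos ‹_›, Option.map_eq_some_iff]
            refine ⟨s', ih hs hs', ?_⟩
            rw [Function.update_idem]
          · exact absurd h1 (by simp)

lemma rewrites_subterm {v v' t w : Term F ar} {p : List ℕ}
    (h : Rewrites R v v') (hp : t.subtermAt p = some v) (hr : t.replaceAt p v' = some w) :
    Rewrites R t w := by
  obtain ⟨q, l, r, σ, hrule, h1, h2⟩ := h
  refine ⟨p ++ q, l, r, σ, hrule, ?_, ?_⟩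
  · rw [Term.subtermAt_append, hp]
    exact h1
  · exact Term.replaceAt_comp hp h2 hr

lemma rewritesStar_subterm {v v' t : Term F ar} {p : List ℕ}
    (h : RewritesStar R v v') (hp : t.subtermAt p = some v) :
    ∃ w, t.replaceAt p v' = some w ∧ RewritesStar R t w := by
  induction h with
  | refl => exact ⟨t, Term.replaceAt_self hp, Relation.ReflTransGen.refl⟩
  | tail _ hstep ih =>
      obtain ⟨w, hw, hstar⟩ := ih
      have hsub : w.subtermAt p = some _ := Term.subtermAt_replaceAt hw
      obtain ⟨w', hw'⟩ := Term.exists_replaceAt hsub _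
      refine ⟨w', ?_, hstar.tail (rewrites_subterm hstep hsub hw')⟩
      · exact Term.replaceAt_replaceAt hw hw'

end RewritingLemmas
section StarApp

open Term

variable {F : Type} {ar : F → ℕ} {R : Set (Term F ar × Term F ar)}

lemma subtermAt_app_fin {f : F} (ts : Fin (ar f) → Term F ar) (i : Fin (ar f)) :
    (Term.app f ts).subtermAt [(i : ℕ)] = some (ts i) := by
  simp only [Term.subtermAt]
  rw [dif_pos i.isLt]

lemma replaceAt_app_fin {f : F} (ts : Fin (ar f) → Term F ar) (i : Fin (ar f))
    (v : Term F ar) :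
    (Term.app f ts).replaceAt [(i : ℕ)] v = some (Term.app f (Function.update ts i v)) := by
  simp only [Term.replaceAt]
  rw [dif_pos i.isLt]
  simp [Fin.eta]

lemma rewritesStar_app_update {f : F} {ts : Fin (ar f) → Term F ar} {i : Fin (ar f)}
    {v : Term F ar} (h : RewritesStar R (ts i) v) :
    RewritesStar R (Term.app f ts) (Term.app f (Function.update ts i v)) := by
  obtain ⟨w, hw, hstar⟩ := rewritesStar_subterm h (subtermAt_app_fin ts i)
  rw [replaceAt_app_fin] at hw
  cases hw
  exact hstar

lemma rewritesStar_app {f : F} {ts us : Fin (ar f) → Term F ar}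
    (h : ∀ i, RewritesStar R (ts i) (us i)) :
    RewritesStar R (Term.app f ts) (Term.app f us) := by
  classical
  have main : ∀ l : List (Fin (ar f)),
      RewritesStar R (Term.app f ts) (Term.app f (fun j => if j ∈ l then us j else ts j)) := by
    intro l
    induction l with
    | nil =>
        have heq : (fun j => if j ∈ ([] : List (Fin (ar f))) then us j else ts j) = ts := by
          funext j; simp
        rw [heq]
    | cons i l ih =>
        by_cases hil : i ∈ l
        · have : (fun j => if j ∈ i :: l then us j else ts j)
              = fun j => if j ∈ l then us j else ts j := by
            funext j
            by_cases hj : j ∈ l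
            · simp [hj, List.mem_cons]
            · by_cases hji : j = i
              · subst hji; simp [hil, hj]
              · simp [hj, hji, List.mem_cons]
          rw [this]; exact ih
        · have heq : (fun j => if j ∈ i :: l then us j else ts j)
              = Function.update (fun j => if j ∈ l then us j else ts j) i (us i) := by
            funext j
            by_cases hji : j = i
            · subst hji; simp [Function.update_self, List.mem_cons]
            · rw [Function.update_of_ne hji]
              simp [List.mem_cons, hji]
          rw [heq]
          refine ih.trans (rewritesStar_app_update ?_)
          simp only [hil, if_neg hil]
          exact h i
  have := main (List.finRange (ar f))
  have heq : (fun j => if j ∈ List.finRange (ar f) then us j else ts j) = us := by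
    funext j; simp [List.mem_finRange]
  rwa [heq] at this

end StarApp

section SRB

open Term

variable {G : Type} {arG : G → ℕ} {Rg : TRS G arG}

lemma Term.isSubtermOf_refl (t : Term G arG) : t.IsSubtermOf t := ⟨[], by cases t <;> rfl⟩

lemma Term.isSubtermOf_child {f : G} (ts : Fin (arG f) → Term G arG) (i : Fin (arG f)) :
    (ts i).IsSubtermOf (Term.app f ts) := ⟨[(i : ℕ)], subtermAt_app_fin ts i⟩

lemma Term.isSubtermOf_trans {s t w : Term G arG} (h1 : s.IsSubtermOf t)
    (h2 : t.IsSubtermOf w) : s.IsSubtermOf w := by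
  obtain ⟨p, hp⟩ := h1
  obtain ⟨q, hq⟩ := h2
  exact ⟨q ++ p, by rw [Term.subtermAt_append, hq]; exact hp⟩

lemma SR_child {f : G} {ts : Fin (arG f) → Term G arG}
    (h : Term.app f ts ∈ SR Rg) (i : Fin (arG f)) : ts i ∈ SR Rg := by
  obtain ⟨lr, hlr, g, ls, hl, j, hsub⟩ := h
  exact ⟨lr, hlr, g, ls, hl, j,
    Term.isSubtermOf_trans (Term.isSubtermOf_child ts i) hsub⟩

lemma SR_lhs_arg {f : G} {ls : Fin (arG f) → Term G arG} {r : Term G arG}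
    (h : (Term.app f ls, r) ∈ Rg.rules) (i : Fin (arG f)) : ls i ∈ SR Rg :=
  ⟨(Term.app f ls, r), h, f, ls, rfl, i, Term.isSubtermOf_refl _⟩

lemma SR_linear (hll : Rg.LeftLinear) {w : Term G arG} (h : w ∈ SR Rg) : w.Linear := by
  obtain ⟨lr, hlr, g, ls, hl, j, p, hp⟩ := h
  have hlin : lr.1.Linear := hll lr hlr
  rw [hl] at hlin
  exact Term.linear_subtermAt (Term.linear_app_child hlin j) hp

lemma stPattern_app {f : G} (ts : Fin (arG f) → Term G arG) :
    stPattern (Term.app f ts) = Term.app f ts := rfl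

lemma stPattern_var (n : ℕ) : stPattern (Term.var n : Term G arG) = Term.var 0 := rfl

lemma var0_mem_BStateSet : (Term.var 0 : Term G arG) ∈ BStateSet Rg :=
  Or.inr rfl

lemma stPattern_mem_BStateSet {w : Term G arG} (h : w ∈ SR Rg) :
    stPattern w ∈ BStateSet Rg := Or.inl ⟨w, h, rfl⟩

lemma app_mem_BStateSet {f : G} {ts : Fin (arG f) → Term G arG}
    (h : Term.app f ts ∈ SR Rg) : Term.app f ts ∈ BStateSet Rg :=
  stPattern_mem_BStateSet h

end SRB

section Runs

open Term

variable {G : Type} {arG : G → ℕ} {Q : Type}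

lemma Reaches.mono {Δ Δ' : Set (TARule G arG Q)} (h : Δ ⊆ Δ') {t : Term G arG} {q : Q}
    (hr : Reaches Δ t q) : Reaches Δ' t q := by
  induction hr with
  | app hts hrule ih => exact Reaches.app ih (h hrule)

lemma ReachesT.mono {Δ Δ' : Set (TARule G arG Q)} (h : Δ ⊆ Δ') {θ : ℕ → Q}
    {t : Term G arG} {q : Q} (hr : ReachesT Δ θ t q) : ReachesT Δ' θ t q := by
  induction hr with
  | var n => exact ReachesT.var n
  | app hts hrule ih => exact ReachesT.app ih (h hrule)

lemma Reaches.toT {Δ : Set (TARule G arG Q)} (θ : ℕ → Q) {t : Term G arG} {q : Q}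
    (hr : Reaches Δ t q) : ReachesT Δ θ t q := by
  induction hr with
  | app hts hrule ih => exact ReachesT.app ih hrule

lemma ReachesT.toReaches {Δ : Set (TARule G arG Q)} {θ : ℕ → Q} {t : Term G arG} {q : Q}
    (hr : ReachesT Δ θ t q) (hg : t.Ground) : Reaches Δ t q := by
  induction hr with
  | var n => exact absurd hg (Term.not_ground_var n)
  | app hts hrule ih =>
      exact Reaches.app (fun i => ih i (Term.ground_app.mp hg i)) hrule

lemma ReachesT.congr {Δ : Set (TARule G arG Q)} {θ θ' : ℕ → Q} {t : Term G arG} {q : Q}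
    (hr : ReachesT Δ θ t q) (h : ∀ n ∈ t.vars, θ n = θ' n) : ReachesT Δ θ' t q := by
  induction hr with
  | var n =>
      rw [h n (by simp [Term.vars])]
      exact ReachesT.var n
  | app hts hrule ih =>
      refine ReachesT.app (fun i => ih i (fun n hn => h n ?_)) hrule
      simp only [Term.vars, Finset.mem_biUnion, Finset.mem_univ, true_and]
      exact ⟨i, hn⟩

lemma ReachesT.subst {Δ : Set (TARule G arG Q)} {θ θ' : ℕ → Q} {t : Term G arG} {q : Q}
    {σ : ℕ → Term G arG} (hr : ReachesT Δ θ t q)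
    (h : ∀ n ∈ t.vars, ReachesT Δ θ' (σ n) (θ n)) : ReachesT Δ θ' (t.subst σ) q := by
  induction hr with
  | var n => exact h n (by simp [Term.vars])
  | app hts hrule ih =>
      exact ReachesT.app (fun i => ih i (fun n hn => h n (by
        simp only [Term.vars, Finset.mem_biUnion, Finset.mem_univ, true_and]
        exact ⟨i, hn⟩))) hrule

lemma ReachesT.substReaches {Δ : Set (TARule G arG Q)} {θ : ℕ → Q} {t : Term G arG} {q : Q}
    {σ : ℕ → Term G arG} (hr : ReachesT Δ θ t q)
    (h : ∀ n ∈ t.vars, Reaches Δ (σ n) (θ n)) : Reaches Δ (t.subst σ) q := by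
  induction hr with
  | var n => exact h n (by simp [Term.vars])
  | app hts hrule ih =>
      exact Reaches.app (fun i => ih i (fun n hn => h n (by
        simp only [Term.vars, Finset.mem_biUnion, Finset.mem_univ, true_and]
        exact ⟨i, hn⟩))) hrule

/-- Splitting a run on an instance of a linear term into runs for the substitution
and a run with variables. -/
lemma reachesT_subst_split {Δ : Set (TARule G arG Q)} {θ' : ℕ → Q}
    {σ : ℕ → Term G arG} :
    ∀ {t : Term G arG}, t.Linear → ∀ {q : Q}, ReachesT Δ θ' (t.subst σ) q →
      ∃ θ : ℕ → Q, ReachesT Δ θ t q ∧ ∀ n ∈ t.vars, ReachesT Δ θ' (σ n) (θ n) := by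
  intro t
  induction t with
  | var n =>
      intro _ q h
      exact ⟨fun _ => q, ReachesT.var n, fun m hm => by
        simp only [Term.vars, Finset.mem_singleton] at hm
        subst hm; exact h⟩
  | app f ts ih =>
      intro hlin q h
      simp only [Term.subst] at h
      cases h with
      | app hts hrule =>
        rename_i qs
        have hch : ∀ i, ∃ θ : ℕ → Q, ReachesT Δ θ (ts i) (qs i) ∧
            ∀ n ∈ (ts i).vars, ReachesT Δ θ' (σ n) (θ n) :=
          fun i => ih i (Term.linear_app_child hlin i) (hts i)
        classical
        choose θs hθ1 hθ2 using hch
        refine ⟨fun m => if hm : ∃ i, m ∈ (ts i).vars then θs hm.choose m else θ' m, ?_, ?_⟩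
        · refine ReachesT.app (fun i => (hθ1 i).congr (fun n hn => ?_)) hrule
          have hex : ∃ j, n ∈ (ts j).vars := ⟨i, hn⟩
          have hch : hex.choose = i := Term.linear_app_disjoint hlin hex.choose_spec hn
          simp only [dif_pos hex, hch]
        · intro n hn
          simp only [Term.vars, Finset.mem_biUnion, Finset.mem_univ, true_and] at hn
          obtain ⟨i, hi⟩ := hn
          have hex : ∃ j, n ∈ (ts j).vars := ⟨i, hi⟩
          have hch : hex.choose = i := Term.linear_app_disjoint hlin hex.choose_spec hi
          simp only [dif_pos hex, hch]
          exact hθ2 i n hi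

lemma reachesT_target_mem {Δ : Set (TARule G arG Q)} {θ : ℕ → Q} {Qs : Set Q}
    (hΔ : ∀ ρ ∈ Δ, ρ.2.2 ∈ Qs) {t : Term G arG} {q : Q}
    (hr : ReachesT Δ θ t q) (hθ : ∀ n ∈ t.vars, θ n ∈ Qs) : q ∈ Qs := by
  cases hr with
  | var n => exact hθ n (by simp [Term.vars])
  | app hts hrule => exact hΔ _ hrule

lemma dn_app {Δ : Set (TARule G arG Q)} (g : G) (ts : Fin (arG g) → Term G arG) :
    dn Δ (Term.app g ts) = oneStep Δ g (fun i => dn Δ (ts i)) := by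
  ext q
  constructor
  · intro h
    cases h with
    | app hts hrule => exact ⟨_, hts, hrule⟩
  · rintro ⟨qs, hqs, hrule⟩
    exact Reaches.app hqs hrule

end Runs
section Debullet

open Term

variable {F : Type} {ar : F → ℕ}

/-- Replace every occurrence of `•` by the variable `0`. -/
def debullet : Term (Option F) (arB ar) → Term (Option F) (arB ar)
  | Term.var n => Term.var n
  | Term.app none _ => Term.var 0
  | Term.app (some f) ts => Term.app (some f) (fun i => debullet (ts i))

lemma debullet_liftB (t : Term F ar) : debullet (liftB t) = liftB t := by
  induction t with
  | var n => rfl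
  | app f ts ih =>
      rw [liftB_app]
      show Term.app (some f) (fun i => debullet (liftB (ts i))) = _
      congr 1
      funext i
      exact ih i

lemma debullet_subst_liftB (l : Term F ar) (σ : ℕ → Term (Option F) (arB ar)) :
    debullet ((liftB l).subst σ) = (liftB l).subst (fun n => debullet (σ n)) := by
  induction l with
  | var n => rfl
  | app f ls ih =>
      rw [liftB_app]
      simp only [Term.subst]
      show Term.app (some f) (fun i => debullet ((liftB (ls i)).subst σ)) = _
      congr 1
      funext i
      exact ih i

lemma debullet_replaceAt {t u : Term (Option F) (arB ar)} {p : List ℕ}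
    (h : t.replaceAt p bulletTm = some u) :
    (debullet t).replaceAt p (Term.var 0) = some (debullet u) := by
  induction p generalizing t u with
  | nil =>
      simp only [Term.replaceAt] at h ⊢
      cases h
      rfl
  | cons i p ih =>
      cases t with
      | var n => simp [Term.replaceAt] at h
      | app g ts =>
          simp only [Term.replaceAt] at h
          split at h
          · rename_i hi
            rw [Option.map_eq_some_iff] at h
            obtain ⟨s, hs, rfl⟩ := h
            cases g with
            | none => exact absurd hi (by simp [arB])
            | some f =>
                show (Term.app (some f) (fun j => debullet (ts j))).replaceAt
                  (i :: p) (Term.var 0) = _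
                simp only [Term.replaceAt]
                rw [dif_pos hi, Option.map_eq_some_iff]
                refine ⟨debullet s, ih hs, ?_⟩
                show Term.app (some f) _ = Term.app (some f)
                  (fun j => debullet (Function.update ts ⟨i, hi⟩ s j))
                congr 1
                funext j
                rcases eq_or_ne j ⟨i, hi⟩ with rfl | hne
                · rw [Function.update_self, Function.update_self]
                · rw [Function.update_of_ne hne, Function.update_of_ne hne]
          · exact absurd h (by simp)

end Debullet

section TRSTransfer

open Term

variable {F : Type} {ar : F → ℕ} {R : TRS F ar}

lemma liftB_rules_mem {l r : Term F ar} (h : (l, r) ∈ R.rules) :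
    (liftB l, liftB r) ∈ R.liftB.rules := ⟨(l, r), h, rfl⟩

lemma liftB_rules_elim {lr : Term (Option F) (arB ar) × Term (Option F) (arB ar)}
    (h : lr ∈ R.liftB.rules) :
    ∃ l r : Term F ar, (l, r) ∈ R.rules ∧ lr = (liftB l, liftB r) := by
  obtain ⟨⟨l, r⟩, hlr, heq⟩ := h
  exact ⟨l, r, hlr, heq.symm⟩

lemma liftB_leftLinear (h : R.IsLinear) : R.liftB.LeftLinear := by
  rintro lr hlr
  obtain ⟨l, r, hmem, rfl⟩ := liftB_rules_elim hlr
  exact liftB_linear (h.1 (l, r) hmem)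

lemma liftB_rightLinear (h : R.IsLinear) : R.liftB.RightLinear := by
  rintro lr hlr
  obtain ⟨l, r, hmem, rfl⟩ := liftB_rules_elim hlr
  exact liftB_linear (h.2 (l, r) hmem)

end TRSTransfer

section SatInfra

open Term

variable {G : Type} {arG : G → ℕ} {Q : Type} {Rg : TRS G arG}
  {enc : Term G arG → Q} {Qc : Set Q} {Γ0 : Set (TARule G arG Q)}

lemma satStep_le (Γ : Set (TARule G arG Q)) : Γ ⊆ satStep Rg enc Qc Γ :=
  Set.subset_union_left

lemma satIter_le_succ (n : ℕ) :
    (satStep Rg enc Qc)^[n] Γ0 ⊆ (satStep Rg enc Qc)^[n + 1] Γ0 := by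
  rw [Function.iterate_succ_apply']
  exact satStep_le _

lemma satIter_mono {m n : ℕ} (h : m ≤ n) :
    (satStep Rg enc Qc)^[m] Γ0 ⊆ (satStep Rg enc Qc)^[n] Γ0 := by
  induction n with
  | zero => rw [Nat.le_zero] at h; subst h; exact le_rfl
  | succ n ih =>
      rcases Nat.lt_or_ge m (n + 1) with h1 | h1
      · exact (ih (Nat.lt_succ_iff.mp h1)).trans (satIter_le_succ n)
      · have : m = n + 1 := le_antisymm h h1
        subst this; exact le_rfl

lemma satIter_le_satGamma (n : ℕ) :
    (satStep Rg enc Qc)^[n] Γ0 ⊆ satGamma Rg enc Qc Γ0 :=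
  Set.subset_iUnion (fun n => (satStep Rg enc Qc)^[n] Γ0) n

lemma Γ0_le_satGamma : Γ0 ⊆ satGamma Rg enc Qc Γ0 := satIter_le_satGamma 0

lemma reachesT_iUnion {ι : Type} [Nonempty ι] {Γ : ι → Set (TARule G arG Q)}
    {dir : ∀ a b : ι, ∃ c, Γ a ⊆ Γ c ∧ Γ b ⊆ Γ c} {θ : ℕ → Q} {t : Term G arG} {q : Q}
    (h : ReachesT (⋃ i, Γ i) θ t q) : ∃ i, ReachesT (Γ i) θ t q := by
  induction h with
  | var n => exact ⟨Classical.arbitrary ι, ReachesT.var n⟩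
  | app hts hrule ih =>
      classical
      rename_i f ts qs q
      choose is his using ih
      obtain ⟨i0, hi0⟩ := Set.mem_iUnion.mp hrule
      -- find a common upper bound of i0 and all is
      have : ∃ c, Γ i0 ⊆ Γ c ∧ ∀ j, Γ (is j) ⊆ Γ c := by
        classical
        have hstep : ∀ (l : List (Fin (arG f))), ∃ c, Γ i0 ⊆ Γ c ∧
            ∀ j ∈ l, Γ (is j) ⊆ Γ c := by
          intro l
          induction l with
          | nil => exact ⟨i0, le_rfl, by simp⟩
          | cons j l ihl =>
              obtain ⟨c, hc1, hc2⟩ := ihl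
              obtain ⟨c', hc'1, hc'2⟩ := dir c (is j)
              refine ⟨c', hc1.trans hc'1, ?_⟩
              intro k hk
              rcases List.mem_cons.mp hk with rfl | hk
              · exact hc'2
              · exact (hc2 k hk).trans hc'1
        obtain ⟨c, hc1, hc2⟩ := hstep (List.finRange (arG f))
        exact ⟨c, hc1, fun j => hc2 j (List.mem_finRange j)⟩
      obtain ⟨c, hc1, hc2⟩ := this
      exact ⟨c, ReachesT.app (fun j => (his j).mono (hc2 j)) (hc1 hi0)⟩

lemma reachesT_satGamma_exists {θ : ℕ → Q} {t : Term G arG} {q : Q}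
    (h : ReachesT (satGamma Rg enc Qc Γ0) θ t q) :
    ∃ n, ReachesT ((satStep Rg enc Qc)^[n] Γ0) θ t q := by
  refine reachesT_iUnion (dir := ?_) h
  intro a b
  rcases Nat.le_total a b with hab | hab
  · exact ⟨b, satIter_mono hab, le_rfl⟩
  · exact ⟨a, le_rfl, satIter_mono hab⟩

lemma satGamma_closed {f : G} {ls : Fin (arG f) → Term G arG} {r : Term G arG}
    {θ : ℕ → Q} {q : Q} (hrule : (Term.app f ls, r) ∈ Rg.rules)
    (hθ : ∀ n ∈ r.vars, θ n ∈ Qc)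
    (h : ReachesT (satGamma Rg enc Qc Γ0) θ r q) :
    (⟨f, fun i => satArg enc θ r.vars (ls i), q⟩ : TARule G arG Q) ∈
      satGamma Rg enc Qc Γ0 := by
  obtain ⟨n, hn⟩ := reachesT_satGamma_exists h
  refine satIter_le_satGamma (n + 1) ?_
  rw [Function.iterate_succ_apply']
  exact Or.inr ⟨f, ls, r, θ, q, hrule, hθ, hn, rfl⟩

end SatInfra
section BRuns

open Term

variable {G : Type} {arG : G → ℕ} {Q : Type} {Rg : TRS G arG}

lemma tarule_snd_eq {f : G} {a a' : Fin (arG f) → Q} {q q' : Q}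
    (h : (⟨f, a, q⟩ : TARule G arG Q) = ⟨f, a', q'⟩) : a = a' ∧ q = q' := by
  have h3 := eq_of_heq (Sigma.ext_iff.mp h).2
  exact ⟨congrArg Prod.fst h3, congrArg Prod.snd h3⟩

lemma reachesT_to_x {enc : Term G arG → Q} {Δ : Set (TARule G arG Q)}
    (hB : BProp enc ⊆ Δ) (t : Term G arG) :
    ReachesT Δ (fun _ => enc (Term.var 0)) t (enc (Term.var 0)) := by
  induction t with
  | var n => exact ReachesT.var n
  | app f ts ih => exact ReachesT.app ih (hB ⟨f, rfl⟩)

lemma reaches_to_x {enc : Term G arG → Q} {Δ : Set (TARule G arG Q)}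
    (hB : BProp enc ⊆ Δ) {t : Term G arG} (hg : t.Ground) :
    Reaches Δ t (enc (Term.var 0)) :=
  (reachesT_to_x hB t).toReaches hg

lemma inst_run {enc enc' : Term G arG → Q} {Δ : Set (TARule G arG Q)}
    (hBM : BMatch Rg enc' ⊆ Δ) (hBp : BProp enc ⊆ Δ)
    (hx' : enc' (Term.var 0) = enc (Term.var 0)) :
    ∀ w : Term G arG, w ∈ SR Rg → ∀ τ : ℕ → Term G arG,
      ReachesT Δ (fun _ => enc (Term.var 0)) (w.subst τ) (enc' (stPattern w)) := by
  intro w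
  induction w with
  | var n =>
      intro _ τ
      rw [stPattern_var, hx']
      exact reachesT_to_x hBp _
  | app f ts ih =>
      intro hw τ
      rw [stPattern_app]
      exact ReachesT.app (fun i => ih i (SR_child hw i) τ)
        (hBM ⟨f, ts, hw, rfl⟩)

lemma BTrans_states {enc : Term G arG → Q} {ρ : TARule G arG Q}
    (h : ρ ∈ BTrans Rg enc) :
    ρ.2.2 ∈ enc '' BStateSet Rg ∧ ∀ i, ρ.2.1 i ∈ enc '' BStateSet Rg := by
  rcases h with hm | hp
  · obtain ⟨f, ts, hSR, rfl⟩ := hm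
    exact ⟨⟨_, app_mem_BStateSet hSR, rfl⟩,
      fun i => ⟨_, stPattern_mem_BStateSet (SR_child hSR i), rfl⟩⟩
  · obtain ⟨f, rfl⟩ := hp
    exact ⟨⟨_, var0_mem_BStateSet, rfl⟩, fun _ => ⟨_, var0_mem_BStateSet, rfl⟩⟩

/-- Runs of the original automaton `𝒜_T ∪ ℬ(ℛ)` separate into runs of the components. -/
lemma reaches_Γ0_sep {T : Set (Term G arG)} [Fintype G] [Fintype Q]
    (C : CSetup Q Rg T) {t : Term G arG} {q : Q} (h : Reaches C.Γ0 t q) :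
    (q ∈ C.QA → Reaches C.A.trans t q) ∧
      (q ∈ C.enc '' BStateSet Rg → Reaches (BTrans Rg C.enc) t q) := by
  induction h with
  | app hts hrule ih =>
      rename_i f ts qs q
      rcases hrule with hA | hB
      · have hQA : q ∈ C.QA := (C.hAstates _ hA).1
        have hrunA : Reaches C.A.trans (Term.app f ts) q :=
          Reaches.app (fun i => (ih i).1 ((C.hAstates _ hA).2 i)) hA
        exact ⟨fun _ => hrunA, fun hq => (C.hshared q ⟨hQA, hq⟩ _).mp hrunA⟩
      · have hEB : q ∈ C.enc '' BStateSet Rg := (BTrans_states hB).1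
        have hrunB : Reaches (BTrans Rg C.enc) (Term.app f ts) q :=
          Reaches.app (fun i => (ih i).2 ((BTrans_states hB).2 i)) hB
        exact ⟨fun hq => (C.hshared q ⟨hq, hEB⟩ _).mpr hrunB, fun _ => hrunB⟩

/-- A term reaching the state `⟨w⟩` in `ℬ(ℛ)` is an instance of `w`. -/
lemma binst_BTrans (hll : Rg.LeftLinear) {enc : Term G arG → Q}
    (hinj : Set.InjOn enc (BStateSet Rg)) :
    ∀ w : Term G arG, w ∈ SR Rg → ∀ t : Term G arG,
      Reaches (BTrans Rg enc) t (enc (stPattern w)) → ∃ σ, t = w.subst σ := by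
  intro w
  induction w with
  | var n => exact fun _ t _ => ⟨fun _ => t, rfl⟩
  | app f ws ih =>
      intro hw t h
      rw [stPattern_app] at h
      cases h with
      | app hts hrule =>
          rename_i g tsT qs
          rcases hrule with hm | hp
          · obtain ⟨f1, ts1, hSR1, heq⟩ := hm
            obtain rfl : g = f1 := congrArg Sigma.fst heq
            obtain ⟨hargs, htgt⟩ := tarule_snd_eq heq
            have : Term.app f ws = Term.app g ts1 :=
              hinj (app_mem_BStateSet hw) (app_mem_BStateSet hSR1) htgt
            obtain ⟨rfl, hws⟩ := Term.app.injEq .. |>.mp this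
            obtain rfl : ws = ts1 := eq_of_heq hws
            have hch : ∀ i, ∃ σ, tsT i = (ws i).subst σ := by
              intro i
              refine ih i (SR_child hw i) (tsT i) ?_
              have := hts i
              rwa [hargs] at this
            obtain ⟨σ, hσ⟩ := exists_subst_combine (SR_linear hll hw) tsT hch
            refine ⟨σ, ?_⟩
            simp only [Term.subst]
            congr 1
            funext i
            exact hσ i
          · obtain ⟨f1, heq⟩ := hp
            obtain rfl : g = f1 := congrArg Sigma.fst heq
            have htgt := (tarule_snd_eq heq).2
            have : Term.app f ws = Term.var 0 :=
              hinj (app_mem_BStateSet hw) var0_mem_BStateSet htgt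
            exact absurd this (by simp)

end BRuns
section QstatesFacts

open Term

variable {G : Type} [Fintype G] {arG : G → ℕ} {Q : Type} [Fintype Q]
  {Rg : TRS G arG} {T : Set (Term G arG)}

lemma CSetup.BTrans_le_Γ0 (C : CSetup Q Rg T) : BTrans Rg C.enc ⊆ C.Γ0 :=
  Set.subset_union_right

lemma CSetup.BProp_le_Γ0 (C : CSetup Q Rg T) : BProp C.enc ⊆ C.Γ0 :=
  Set.subset_union_right.trans C.BTrans_le_Γ0

lemma CSetup.BMatch_le_Γ0 (C : CSetup Q Rg T) : BMatch Rg C.enc ⊆ C.Γ0 :=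
  Set.Subset.trans Set.subset_union_left C.BTrans_le_Γ0

lemma CSetup.A_le_Γ0 (C : CSetup Q Rg T) : C.A.trans ⊆ C.Γ0 := Set.subset_union_left

lemma CSetup.Γ0_le_Γsat (C : CSetup Q Rg T) : C.Γ0 ⊆ C.Γsat := Γ0_le_satGamma

lemma CSetup.encx_mem_Qstates (C : CSetup Q Rg T) :
    C.enc (Term.var 0) ∈ C.Qstates := Or.inr ⟨Term.var 0, var0_mem_BStateSet, rfl⟩

lemma CSetup.QA_le_Qstates (C : CSetup Q Rg T) : C.QA ⊆ C.Qstates :=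
  Set.subset_union_left

lemma CSetup.encB_le_Qstates (C : CSetup Q Rg T) :
    C.enc '' BStateSet Rg ⊆ C.Qstates := Set.subset_union_right

lemma CSetup.good_Γ0 (C : CSetup Q Rg T) :
    ∀ ρ ∈ C.Γ0, ρ.2.2 ∈ C.Qstates ∧ ∀ i, ρ.2.1 i ∈ C.Qstates := by
  rintro ρ (hA | hB)
  · exact ⟨C.QA_le_Qstates (C.hAstates ρ hA).1,
      fun i => C.QA_le_Qstates ((C.hAstates ρ hA).2 i)⟩
  · exact ⟨C.encB_le_Qstates (BTrans_states hB).1,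
      fun i => C.encB_le_Qstates ((BTrans_states hB).2 i)⟩

lemma satArg_mem_Qstates (C : CSetup Q Rg T) {θ : ℕ → Q} {rv : Finset ℕ}
    (hθ : ∀ n ∈ rv, θ n ∈ C.Qstates) {w : Term G arG} (hw : w ∈ SR Rg) :
    satArg C.enc θ rv w ∈ C.Qstates := by
  cases w with
  | var m =>
      show (if m ∈ rv then θ m else C.enc (Term.var 0)) ∈ C.Qstates
      split
      · exact hθ m ‹_›
      · exact C.encx_mem_Qstates
  | app g ss =>
      exact C.encB_le_Qstates ⟨Term.app g ss, app_mem_BStateSet hw, rfl⟩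

lemma CSetup.good_iter (C : CSetup Q Rg T) :
    ∀ n, ∀ ρ ∈ (satStep Rg C.enc C.Qstates)^[n] C.Γ0,
      ρ.2.2 ∈ C.Qstates ∧ ∀ i, ρ.2.1 i ∈ C.Qstates := by
  intro n
  induction n with
  | zero => exact C.good_Γ0
  | succ n ih =>
      rw [Function.iterate_succ_apply']
      rintro ρ (hold | hnew)
      · exact ih ρ hold
      · obtain ⟨f, ls, r, θ, q, hrule, hθ, hreach, rfl⟩ := hnew
        constructor
        · exact reachesT_target_mem (fun ρ' hρ' => (ih ρ' hρ').1) hreach hθ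
        · intro i
          exact satArg_mem_Qstates C hθ (SR_lhs_arg hrule i)

lemma CSetup.good_Γsat (C : CSetup Q Rg T) :
    ∀ ρ ∈ C.Γsat, ρ.2.2 ∈ C.Qstates ∧ ∀ i, ρ.2.1 i ∈ C.Qstates := by
  intro ρ hρ
  obtain ⟨S, ⟨n, rfl⟩, hmem⟩ := hρ
  exact C.good_iter n ρ hmem

lemma CSetup.qstates_witness (C : CSetup Q Rg T) :
    ∀ q ∈ C.Qstates, ∃ w : Term G arG, w.Ground ∧ Reaches C.Γ0 w q := by
  rintro q (hQA | ⟨u, hu, rfl⟩)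
  · obtain ⟨w, hw1, hw2⟩ := C.hacc q hQA
    exact ⟨w, hw1, hw2.mono C.A_le_Γ0⟩
  · obtain ⟨s0, hs0⟩ := C.hground
    rcases hu with ⟨w', hw', rfl⟩ | hu
    · cases w' with
      | var n =>
          rw [stPattern_var]
          exact ⟨s0, hs0, reaches_to_x C.BProp_le_Γ0 hs0⟩
      | app f ts =>
          refine ⟨(Term.app f ts).subst (fun _ => s0),
            Term.ground_subst (fun _ _ => hs0), ?_⟩
          have := inst_run (Rg := Rg) C.BMatch_le_Γ0 C.BProp_le_Γ0 rfl
            (Term.app f ts) hw' (fun _ => s0)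
          rw [stPattern_app] at this ⊢
          exact this.toReaches (Term.ground_subst (fun _ _ => hs0))
    · rw [Set.mem_singleton_iff] at hu
      subst hu
      exact ⟨s0, hs0, reaches_to_x C.BProp_le_Γ0 hs0⟩

end QstatesFacts

section CpFacts

open Term

variable {G : Type} [Fintype G] {arG : G → ℕ} {Q : Type} [Fintype Q]
  {Rg : TRS G arG} {T : Set (Term G arG)}

lemma CpSetup.Γsat_le_Γ' (C : CpSetup Q Rg T) : C.toCSetup.Γsat ⊆ C.Γ' := fun ρ h =>
  Or.inl (Or.inl (Or.inl h))

lemma CpSetup.BMatch2_le_Γ' (C : CpSetup Q Rg T) : BMatch Rg C.enc2 ⊆ C.Γ' := fun ρ h =>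
  Or.inl (Or.inl (Or.inr h))

lemma CpSetup.RedexRules_le_Γ' (C : CpSetup Q Rg T) :
    RedexRules Rg C.enc2 C.qr ⊆ C.Γ' := fun ρ h => Or.inl (Or.inr h)

lemma CpSetup.QrProp_le_Γ' (C : CpSetup Q Rg T) : QrProp C.enc C.qr ⊆ C.Γ' :=
  Set.subset_union_right

lemma CpSetup.BProp_le_Γ' (C : CpSetup Q Rg T) : BProp C.enc ⊆ C.Γ' :=
  (C.toCSetup.BProp_le_Γ0.trans C.toCSetup.Γ0_le_Γsat).trans C.Γsat_le_Γ'

lemma CpSetup.qr_not_mem_Qstates (C : CpSetup Q Rg T) : C.qr ∉ C.toCSetup.Qstates := by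
  intro h
  have : C.qr ∈ (C.enc2 '' (BStateSet Rg \ {Term.var 0}) ∪ {C.qr}) ∩
      (C.QA ∪ C.enc '' BStateSet Rg) := ⟨Or.inr rfl, h⟩
  rw [C.hfresh] at this
  exact this

lemma CpSetup.enc2_app_not_mem_Qstates (C : CpSetup Q Rg T) {f : G}
    {ts : Fin (arG f) → Term G arG} (h : Term.app f ts ∈ BStateSet Rg) :
    C.enc2 (Term.app f ts) ∉ C.toCSetup.Qstates := by
  intro hmem
  have : C.enc2 (Term.app f ts) ∈ (C.enc2 '' (BStateSet Rg \ {Term.var 0}) ∪ {C.qr}) ∩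
      (C.QA ∪ C.enc '' BStateSet Rg) :=
    ⟨Or.inl ⟨Term.app f ts, ⟨h, by simp⟩, rfl⟩, hmem⟩
  rw [C.hfresh] at this
  exact this

lemma CpSetup.qr_ne_enc2_app (C : CpSetup Q Rg T) {f : G}
    {ts : Fin (arG f) → Term G arG} (h : Term.app f ts ∈ BStateSet Rg) :
    C.qr ≠ C.enc2 (Term.app f ts) := by
  intro heq
  exact C.hqr ⟨Term.app f ts, ⟨h, by simp⟩, heq.symm⟩

lemma RedexRules_target {enc2 : Term G arG → Q} {qr : Q} {ρ : TARule G arG Q}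
    (h : ρ ∈ RedexRules Rg enc2 qr) : ρ.2.2 = qr := by
  obtain ⟨f, ls, r, _, rfl⟩ := h
  rfl

lemma QrProp_target {enc : Term G arG → Q} {qr : Q} {ρ : TARule G arG Q}
    (h : ρ ∈ QrProp enc qr) : ρ.2.2 = qr := by
  obtain ⟨f, j, rfl⟩ := h
  rfl

lemma BMatch_target_cases {enc2 : Term G arG → Q} {ρ : TARule G arG Q}
    (h : ρ ∈ BMatch Rg enc2) :
    ∃ (f : G) (ts : Fin (arG f) → Term G arG), Term.app f ts ∈ SR Rg ∧
      ρ.2.2 = enc2 (Term.app f ts) := by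
  obtain ⟨f, ts, hSR, rfl⟩ := h
  exact ⟨f, ts, hSR, rfl⟩

/-- A `Γ'`-run ending in a state of `𝒞_T(ℛ)` is a run of `𝒞_T(ℛ)`. -/
lemma CpSetup.reaches_restrict (C : CpSetup Q Rg T) {t : Term G arG} {q : Q}
    (h : Reaches C.Γ' t q) (hq : q ∈ C.toCSetup.Qstates) :
    Reaches C.toCSetup.Γsat t q := by
  induction h with
  | app hts hrule ih =>
      rename_i f ts qs q
      rcases hrule with ((hsat | hm) | hrr) | hqp
      · exact Reaches.app (fun i => ih i ((C.toCSetup.good_Γsat _ hsat).2 i)) hsat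
      · obtain ⟨f1, ts1, hSR1, htgt⟩ := BMatch_target_cases hm
        have htgt2 : q = C.enc2 (Term.app f1 ts1) := htgt
        rw [htgt2] at hq
        exact absurd hq (C.enc2_app_not_mem_Qstates (app_mem_BStateSet hSR1))
      · have h2 : q = C.qr := RedexRules_target hrr
        rw [h2] at hq
        exact absurd hq C.qr_not_mem_Qstates
      · have h2 : q = C.qr := QrProp_target hqp
        rw [h2] at hq
        exact absurd hq C.qr_not_mem_Qstates

end CpFacts
section NFFacts

open Term

variable {F : Type} {ar : F → ℕ} {R : TRS F ar}

lemma bulletTm_subst (σ : ℕ → Term (Option F) (arB ar)) :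
    (bulletTm : Term (Option F) (arB ar)).subst σ = bulletTm := by
  simp only [bulletTm, Term.subst]
  congr 1
  funext i
  exact i.elim0

lemma app_none_eq_bullet (ts : Fin (arB ar none) → Term (Option F) (arB ar)) :
    Term.app none ts = bulletTm := by
  simp only [bulletTm]
  congr 1
  funext i
  exact i.elim0

lemma bullet_isRedex : (R.bullet).IsRedex bulletTm := by
  refine ⟨(bulletTm, bulletTm), Or.inr rfl, fun _ => bulletTm, ?_⟩
  rw [bulletTm_subst]

lemma bullet_ground : (bulletTm : Term (Option F) (arB ar)).Ground := by
  refine Term.ground_app.mpr ?_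
  exact fun i => i.elim0

lemma TRS.redexPos_child {G : Type} {arG : G → ℕ} (S : TRS G arG) {g : G}
    {ts : Fin (arG g) → Term G arG} {i : Fin (arG g)} {p : List ℕ}
    (h : S.RedexPos (ts i) p) : S.RedexPos (Term.app g ts) ((i : ℕ) :: p) := by
  obtain ⟨u, hu, hred⟩ := h
  refine ⟨u, ?_, hred⟩
  show (if h : (i : ℕ) < arG g then (ts ⟨i, h⟩).subtermAt p else none) = some u
  rw [dif_pos i.isLt]
  simpa using hu

lemma NF_unlift {nf : Term (Option F) (arB ar)} (h : nf ∈ TRS.NFset R.bullet) :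
    ∃ s0 : Term F ar, nf = liftB s0 := by
  obtain ⟨hg, hnred⟩ := h
  induction nf with
  | var n => exact absurd hg (Term.not_ground_var n)
  | app g ts ih =>
      cases g with
      | none =>
          exfalso
          apply hnred
          refine ⟨[], Term.app none ts, rfl, ?_⟩
          rw [app_none_eq_bullet]
          exact bullet_isRedex
      | some f =>
          have hch : ∀ i, ∃ s0, ts i = liftB s0 := by
            intro i
            refine ih i (Term.ground_app.mp hg i) ?_
            intro ⟨p, hp⟩
            exact hnred ⟨_, TRS.redexPos_child R.bullet hp⟩
          choose s0 hs0 using hch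
          refine ⟨Term.app f s0, ?_⟩
          refine Eq.trans ?_ (liftB_app f s0).symm
          congr 1
          funext i
          exact hs0 i

lemma bullet_not_mem_NF : (bulletTm : Term (Option F) (arB ar)) ∉ TRS.NFset R.bullet := by
  rintro ⟨-, hnred⟩
  exact hnred ⟨[], bulletTm, rfl, bullet_isRedex⟩

lemma bullet_liftB_star {t : Term (Option F) (arB ar)}
    (h : RewritesStar R.liftB.rules bulletTm t) : t = bulletTm := by
  induction h with
  | refl => rfl
  | tail hstar hstep ih =>
      subst ih
      exfalso
      obtain ⟨p, l, r, σ, hrule, hsub, -⟩ := hstep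
      obtain ⟨l0, r0, hrule0, heq⟩ := liftB_rules_elim hrule
      obtain ⟨rfl, rfl⟩ := Prod.mk.injEq .. |>.mp heq
      cases p with
      | cons i p =>
          rw [show (bulletTm : Term (Option F) (arB ar)).subtermAt (i :: p)
            = if h : i < arB ar none then (Fin.elim0 ⟨i, h⟩ :
                Term (Option F) (arB ar)).subtermAt p else none from rfl] at hsub
          rw [dif_neg (by simp [arB])] at hsub
          simp at hsub
      | nil =>
          have hb : bulletTm = (liftB l0).subst σ := by
            have : some (bulletTm : Term (Option F) (arB ar)) = _ := hsub
            exact Option.some.injEq .. |>.mp this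
          cases hl0 : l0 with
          | var m => exact R.lhs_not_var (l0, r0) hrule0 m hl0
          | app f ts0 =>
              rw [hl0, liftB_app] at hb
              simp only [Term.subst, bulletTm] at hb
              have := congrArg (fun t => match t with
                | Term.app f _ => (f : Option F)
                | Term.var _ => none) hb
              simp at this

end NFFacts

section Completeness

open Term

variable {F : Type} [Fintype F] {ar : F → ℕ} {Q : Type} [Fintype Q]

/-- Key step of completeness: lifting a run over a root rewrite step. -/
lemma Lstep {R : TRS F ar} (hlin : R.IsLinear) {T : Set (Term (Option F) (arB ar))}
    (C : CSetup Q R.liftB T) {l0 r0 : Term F ar} (hrule : (l0, r0) ∈ R.rules)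
    (σ' : ℕ → Term (Option F) (arB ar)) {q : Q}
    (h : ReachesT C.Γsat (fun _ => C.enc (Term.var 0)) ((liftB r0).subst σ') q) :
    ReachesT C.Γsat (fun _ => C.enc (Term.var 0)) ((liftB l0).subst σ') q := by
  classical
  have hrlin : (liftB r0 : Term (Option F) (arB ar)).Linear :=
    liftB_linear (hlin.2 (l0, r0) hrule)
  obtain ⟨θ0, hr, hθruns⟩ := reachesT_subst_split hrlin h
  set θ : ℕ → Q := fun n => if n ∈ (liftB r0 : Term (Option F) (arB ar)).vars
    then θ0 n else C.enc (Term.var 0) with hθdef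
  have hrθ : ReachesT C.Γsat θ (liftB r0) q :=
    hr.congr (fun n hn => by simp only [hθdef, if_pos hn])
  have hθQ : ∀ n ∈ (liftB r0 : Term (Option F) (arB ar)).vars, θ n ∈ C.Qstates := by
    intro n hn
    simp only [hθdef, if_pos hn]
    exact reachesT_target_mem (fun ρ hρ => (C.good_Γsat ρ hρ).1) (hθruns n hn)
      (fun _ _ => C.encx_mem_Qstates)
  cases hl0 : l0 with
  | var m => exact absurd hl0 (R.lhs_not_var (l0, r0) hrule m)
  | app f ts0 =>
      subst hl0
      rw [liftB_app]
      have hrule' : (Term.app (some f) (fun i => liftB (ts0 i)), liftB r0)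
          ∈ R.liftB.rules := by
        have := liftB_rules_mem hrule
        rwa [liftB_app] at this
      have hmem := satGamma_closed (enc := C.enc) (Qc := C.Qstates) (Γ0 := C.Γ0)
        hrule' hθQ hrθ
      have hch : ∀ i : Fin (ar f), ReachesT C.Γsat (fun _ => C.enc (Term.var 0))
          ((liftB (ts0 i)).subst σ')
          (satArg C.enc θ (liftB r0 : Term (Option F) (arB ar)).vars (liftB (ts0 i))) := by
        intro i
        cases hts : ts0 i with
        | var n =>
            show ReachesT _ _ (σ' n)
              (if n ∈ (liftB r0 : Term (Option F) (arB ar)).vars then θ n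
                else C.enc (Term.var 0))
            by_cases hn : n ∈ (liftB r0 : Term (Option F) (arB ar)).vars
            · rw [if_pos hn]
              simp only [hθdef, if_pos hn]
              exact hθruns n hn
            · rw [if_neg hn]
              exact reachesT_to_x (C.BProp_le_Γ0.trans C.Γ0_le_Γsat) _
        | app g ss =>
            rw [liftB_app]
            have hSRmem : Term.app (some g) (fun j => liftB (ss j)) ∈ SR R.liftB := by
              simpa only [hts, liftB_app] using SR_lhs_arg hrule' i
            have hrun := inst_run (Rg := R.liftB) (C.BMatch_le_Γ0.trans C.Γ0_le_Γsat)
              (C.BProp_le_Γ0.trans C.Γ0_le_Γsat) rfl _ hSRmem σ'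
            rw [stPattern_app] at hrun
            exact hrun
      show ReachesT C.Γsat (fun _ => C.enc (Term.var 0))
        (Term.app (some f) (fun i => (liftB (ts0 i)).subst σ')) q
      exact ReachesT.app hch hmem

lemma completeness_step_aux {R : TRS F ar} (hlin : R.IsLinear)
    {T : Set (Term (Option F) (arB ar))} (C : CSetup Q R.liftB T)
    {l0 r0 : Term F ar} (hrule0 : (l0, r0) ∈ R.rules)
    (σ : ℕ → Term (Option F) (arB ar)) :
    ∀ (p : List ℕ) (t t' : Term (Option F) (arB ar)) (q : Q),
      t.subtermAt p = some ((liftB l0).subst σ) →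
      t.replaceAt p ((liftB r0).subst σ) = some t' →
      ReachesT C.Γsat (fun _ => C.enc (Term.var 0)) (debullet t') q →
      ReachesT C.Γsat (fun _ => C.enc (Term.var 0)) (debullet t) q := by
  intro p
  induction p with
  | nil =>
      intro t t' q hsub hrep h
      rw [show t.subtermAt [] = some t from by cases t <;> rfl] at hsub
      rw [show t.replaceAt [] ((liftB r0).subst σ) = some ((liftB r0).subst σ)
        from by cases t <;> rfl] at hrep
      have ht : t = (liftB l0).subst σ := Option.some.inj hsub
      have ht' : t' = (liftB r0).subst σ := (Option.some.inj hrep).symm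
      subst ht; subst ht'
      rw [debullet_subst_liftB] at h ⊢
      exact Lstep hlin C hrule0 _ h
  | cons i p ih =>
      intro t t' q hsub hrep h
      cases t with
      | var n => simp [Term.subtermAt] at hsub
      | app g ts =>
          simp only [Term.subtermAt] at hsub
          simp only [Term.replaceAt] at hrep
          split at hsub
          · rename_i hi
            rw [dif_pos hi] at hrep
            rw [Option.map_eq_some_iff] at hrep
            obtain ⟨s, hs, rfl⟩ := hrep
            cases g with
            | none => exact absurd hi (by simp [arB])
            | some f =>
                have hdt' : debullet (Term.app (some f) (Function.update ts ⟨i, hi⟩ s))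
                    = Term.app (some f)
                      (Function.update (fun j => debullet (ts j)) ⟨i, hi⟩ (debullet s)) := by
                  show Term.app (some f) _ = _
                  congr 1
                  funext j
                  rcases eq_or_ne j ⟨i, hi⟩ with rfl | hne
                  · rw [Function.update_self, Function.update_self]
                  · rw [Function.update_of_ne hne, Function.update_of_ne hne]
                rw [hdt'] at h
                cases h with
                | app hts hrule =>
                    rename_i qs
                    have hchild : ReachesT C.Γsat (fun _ => C.enc (Term.var 0))
                        (debullet (ts ⟨i, hi⟩)) (qs ⟨i, hi⟩) := by
                      refine ih (ts ⟨i, hi⟩) s _ hsub hs ?_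
                      have := hts ⟨i, hi⟩
                      rwa [Function.update_self] at this
                    show ReachesT _ _ (Term.app (some f) (fun j => debullet (ts j))) q
                    refine ReachesT.app (fun j => ?_) hrule
                    rcases eq_or_ne j ⟨i, hi⟩ with rfl | hne
                    · exact hchild
                    · have := hts j
                      rwa [Function.update_of_ne hne] at this
          · exact absurd hsub (by simp)

lemma completeness_step {R : TRS F ar} (hlin : R.IsLinear)
    {T : Set (Term (Option F) (arB ar))} (C : CSetup Q R.liftB T)
    {t t' : Term (Option F) (arB ar)} {q : Q}
    (hstep : Rewrites R.liftB.rules t t')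
    (h : ReachesT C.Γsat (fun _ => C.enc (Term.var 0)) (debullet t') q) :
    ReachesT C.Γsat (fun _ => C.enc (Term.var 0)) (debullet t) q := by
  obtain ⟨p, l, r, σ, hrule, hsub, hrep⟩ := hstep
  obtain ⟨l0, r0, hrule0, heq⟩ := liftB_rules_elim hrule
  obtain ⟨rfl, rfl⟩ := Prod.mk.injEq .. |>.mp heq
  exact completeness_step_aux hlin C hrule0 σ p t t' q hsub hrep h

lemma completeness {R : TRS F ar} (hlin : R.IsLinear)
    (C : CSetup Q R.liftB (TRS.NFset R.bullet))
    {t nf : Term (Option F) (arB ar)}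
    (hstar : RewritesStar R.liftB.rules t nf) (hnf : nf ∈ TRS.NFset R.bullet) :
    ∃ qf ∈ C.A.final, ReachesT C.Γsat (fun _ => C.enc (Term.var 0)) (debullet t) qf := by
  induction hstar using Relation.ReflTransGen.head_induction_on with
  | refl =>
      obtain ⟨s0, rfl⟩ := NF_unlift hnf
      have hLang : liftB s0 ∈ Lang C.A := by rw [← C.hT]; exact hnf
      obtain ⟨hg, qf, hqf, hrun⟩ := hLang
      refine ⟨qf, hqf, ?_⟩
      rw [debullet_liftB]
      exact (hrun.mono (C.A_le_Γ0.trans C.Γ0_le_Γsat)).toT _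
  | head hstep _ ih =>
      obtain ⟨qf, hqf, hrun⟩ := ih
      exact ⟨qf, hqf, completeness_step hlin C hstep hrun⟩

end Completeness
section Soundness

open Term

variable {F : Type} [Fintype F] {ar : F → ℕ} {Q : Type} [Fintype Q]

lemma soundness_iter (R : TRS F ar) (hlin : R.IsLinear) (hgrow : R.Growing)
    {T : Set (Term (Option F) (arB ar))} (C : CSetup Q R.liftB T) :
    ∀ n, ∀ (t : Term (Option F) (arB ar)) (q : Q), t.Ground →
      Reaches ((satStep R.liftB C.enc C.Qstates)^[n] C.Γ0) t q →
      ∃ t', t'.Ground ∧ RewritesStar R.liftB.rules t t' ∧ Reaches C.Γ0 t' q := by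
  classical
  have hll : R.liftB.LeftLinear := liftB_leftLinear hlin
  intro n
  induction n with
  | zero => exact fun t q hg hr => ⟨t, hg, Relation.ReflTransGen.refl, hr⟩
  | succ n IHn =>
      intro t q hg hr
      rw [Function.iterate_succ_apply'] at hr
      revert hg
      induction hr with
      | app hts hrule ih =>
          rename_i g0 ts qs q
          intro hg
          have hch : ∀ i, ∃ t', t'.Ground ∧ RewritesStar R.liftB.rules (ts i) t' ∧
              Reaches C.Γ0 t' (qs i) := fun i => ih i (Term.ground_app.mp hg i)
          choose tc htcg htcs htcr using hch
          have hΓ0le : C.Γ0 ⊆ (satStep R.liftB C.enc C.Qstates)^[n] C.Γ0 :=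
            satIter_mono (Nat.zero_le n)
          rcases hrule with hold | hnew
          · -- rule already present at stage n
            have hrun : Reaches ((satStep R.liftB C.enc C.Qstates)^[n] C.Γ0)
                (Term.app g0 tc) q :=
              Reaches.app (fun i => (htcr i).mono hΓ0le) hold
            obtain ⟨t'', h1, h2, h3⟩ := IHn (Term.app g0 tc) q (Term.ground_app.mpr htcg) hrun
            exact ⟨t'', h1, (rewritesStar_app htcs).trans h2, h3⟩
          · -- new rule from saturation
            obtain ⟨f0, ls, r, θ, q0, hrule0, hθ, hreach, ρeq⟩ := hnew
            obtain rfl : g0 = f0 := congrArg Sigma.fst ρeq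
            obtain ⟨hqs, rfl⟩ := tarule_snd_eq ρeq
            obtain ⟨l0, r0, hmemR, heq⟩ := liftB_rules_elim hrule0
            have hfst : Term.app g0 ls = liftB l0 := congrArg Prod.fst heq
            have hsnd : r = liftB r0 := congrArg Prod.snd heq
            subst hsnd
            cases hl0 : l0 with
            | var m => exact absurd hl0 (R.lhs_not_var (l0, r0) hmemR m)
            | app g1 ts0 =>
                subst hl0
                rw [liftB_app] at hfst
                obtain ⟨rfl, hls⟩ := Term.app.injEq .. |>.mp hfst
                obtain rfl : ls = fun i => liftB (ts0 i) := eq_of_heq hls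
                -- the lifted rule
                have hruleL : (Term.app (some g1) (fun i => liftB (ts0 i)), liftB r0)
                    ∈ R.liftB.rules := hrule0
                -- each child reaching a non-variable pattern state is an instance
                have hcomb : ∀ i, ∃ τ, tc i = (liftB (ts0 i)).subst τ := by
                  intro i
                  cases hts0 : ts0 i with
                  | var m => exact ⟨fun _ => tc i, rfl⟩
                  | app g2 ss =>
                      have hSRi : Term.app (some g2) (fun j => liftB (ss j)) ∈ SR R.liftB := by
                        simpa only [hts0, liftB_app] using SR_lhs_arg hruleL i
                      have hreach0 : Reaches C.Γ0 (tc i)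
                          (C.enc (Term.app (some g2) (fun j => liftB (ss j)))) := by
                        have := htcr i
                        rw [hqs] at this
                        simpa only [hts0, liftB_app, satArg] using this
                      have hsep := (reaches_Γ0_sep C hreach0).2
                        ⟨_, app_mem_BStateSet hSRi, rfl⟩
                      obtain ⟨τ, hτ⟩ := binst_BTrans hll C.henc _ hSRi (tc i) (by
                        rwa [stPattern_app])
                      rw [liftB_app]
                      exact ⟨τ, hτ⟩
                have hlinl : (Term.app (some g1) (fun i => liftB (ts0 i))).Linear := by
                  have := liftB_linear (hlin.1 (Term.app g1 ts0, r0) hmemR)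
                  rwa [liftB_app] at this
                obtain ⟨σA, hσA⟩ := exists_subst_combine hlinl tc hcomb
                -- the full substitution
                set σstar : ℕ → Term (Option F) (arB ar) := fun m =>
                  if m ∈ (Term.app (some g1) (fun i => liftB (ts0 i))).vars then σA m
                  else if hm2 : θ m ∈ C.Qstates then
                    Classical.choose (C.qstates_witness (θ m) hm2)
                  else Term.var 0 with hσstar
                have hinst : ∀ i, tc i = (liftB (ts0 i)).subst σstar := by
                  intro i
                  rw [hσA i]
                  apply Term.subst_congr
                  intro m hm
                  have hmem : m ∈ (Term.app (some g1) (fun i => liftB (ts0 i))).vars := by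
                    simp only [Term.vars, Finset.mem_biUnion, Finset.mem_univ, true_and]
                    exact ⟨i, hm⟩
                  simp only [hσstar, if_pos hmem]
                -- runs for the substitution on the variables of r
                have hσruns : ∀ m ∈ (liftB r0 : Term (Option F) (arB ar)).vars,
                    (σstar m).Ground ∧
                    Reaches ((satStep R.liftB C.enc C.Qstates)^[n] C.Γ0) (σstar m) (θ m) := by
                  intro m hm
                  by_cases hmem : m ∈ (Term.app (some g1) (fun i => liftB (ts0 i))).vars
                  · -- growing case: m occurs at depth 1 in the lhs
                    have hm0 : m ∈ (Term.app (some g1) (fun i => liftB (ts0 i))).vars := hmem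
                    simp only [Term.vars, Finset.mem_biUnion, Finset.mem_univ, true_and] at hm0
                    obtain ⟨i0, hi0⟩ := hm0
                    rw [liftB_vars] at hi0
                    have hmr0 : m ∈ r0.vars := by rwa [liftB_vars] at hm
                    have hml0 : m ∈ (Term.app g1 ts0).vars := by
                      simp only [Term.vars, Finset.mem_biUnion, Finset.mem_univ, true_and]
                      exact ⟨i0, hi0⟩
                    have hvar : ts0 i0 = Term.var m :=
                      hgrow (Term.app g1 ts0, r0) hmemR m hml0 hmr0 g1 ts0 rfl i0 hi0
                    have hσm : σstar m = tc i0 := by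
                      have := hinst i0
                      rw [hvar] at this
                      exact this.symm
                    rw [hσm]
                    refine ⟨htcg i0, ?_⟩
                    have hrch := htcr i0
                    simp only [hqs] at hrch
                    have hsat : satArg C.enc θ
                        (liftB r0 : Term (Option F) (arB ar)).vars (liftB (ts0 i0)) = θ m := by
                      rw [hvar]
                      show (if m ∈ (liftB r0 : Term (Option F) (arB ar)).vars
                        then θ m else C.enc (Term.var 0)) = θ m
                      rw [if_pos hm]
                    rw [hsat] at hrch
                    exact hrch.mono hΓ0le
                  · have hθm : θ m ∈ C.Qstates := hθ m hm
                    have hspec := Classical.choose_spec (C.qstates_witness (θ m) hθm)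
                    have hσm : σstar m = Classical.choose (C.qstates_witness (θ m) hθm) := by
                      simp only [hσstar, if_neg hmem, dif_pos hθm]
                    rw [hσm]
                    exact ⟨hspec.1, hspec.2.mono hΓ0le⟩
                -- the reduct
                have hrunT : Reaches ((satStep R.liftB C.enc C.Qstates)^[n] C.Γ0)
                    ((liftB r0).subst σstar) q :=
                  hreach.substReaches (fun m hm => (hσruns m hm).2)
                have hgroundT : ((liftB r0).subst σstar).Ground :=
                  Term.ground_subst (fun m hm => (hσruns m hm).1)
                -- one rewrite step at the root
                have happ : Term.app (some g1) tc
                    = (Term.app (some g1) (fun i => liftB (ts0 i))).subst σstar := by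
                  simp only [Term.subst]
                  congr 1
                  funext i
                  exact hinst i
                have hstep : Rewrites R.liftB.rules (Term.app (some g1) tc)
                    ((liftB r0).subst σstar) := by
                  refine ⟨[], Term.app (some g1) (fun i => liftB (ts0 i)), liftB r0, σstar,
                    hruleL, ?_, rfl⟩
                  rw [show (Term.app (some g1) tc).subtermAt [] = some (Term.app (some g1) tc)
                    from rfl]
                  rw [happ]
                obtain ⟨t'', h1, h2, h3⟩ := IHn ((liftB r0).subst σstar) q hgroundT hrunT
                refine ⟨t'', h1, ?_, h3⟩
                exact ((rewritesStar_app htcs).tail hstep).trans h2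

lemma soundness (R : TRS F ar) (hlin : R.IsLinear) (hgrow : R.Growing)
    {T : Set (Term (Option F) (arB ar))} (C : CSetup Q R.liftB T)
    {t : Term (Option F) (arB ar)} {q : Q} (hg : t.Ground) (h : Reaches C.Γsat t q) :
    ∃ t', t'.Ground ∧ RewritesStar R.liftB.rules t t' ∧ Reaches C.Γ0 t' q := by
  have hT := h.toT (fun _ => C.enc (Term.var 0))
  obtain ⟨n, hn⟩ := reachesT_satGamma_exists hT
  exact soundness_iter R hlin hgrow C n t q hg (hn.toReaches hg)

end Soundness
section RedexLemmas

open Term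

variable {F : Type} {ar : F → ℕ}

lemma TRS.redexPos_nil_iff (S : TRS F ar) (u : Term F ar) :
    S.RedexPos u [] ↔ S.IsRedex u := by
  constructor
  · rintro ⟨v, hv, hred⟩
    rw [show u.subtermAt [] = some u from by cases u <;> rfl] at hv
    cases Option.some.inj hv
    exact hred
  · intro h
    exact ⟨u, by cases u <;> rfl, h⟩

lemma TRS.redexPos_cons_iff (S : TRS F ar) {g : F} {ts : Fin (ar g) → Term F ar}
    {i : ℕ} {p : List ℕ} :
    S.RedexPos (Term.app g ts) (i :: p) ↔ ∃ h : i < ar g, S.RedexPos (ts ⟨i, h⟩) p := by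
  constructor
  · rintro ⟨v, hv, hred⟩
    rw [show (Term.app g ts).subtermAt (i :: p)
      = if h : i < ar g then (ts ⟨i, h⟩).subtermAt p else none from rfl] at hv
    by_cases hi : i < ar g
    · rw [dif_pos hi] at hv
      exact ⟨hi, v, hv, hred⟩
    · rw [dif_neg hi] at hv
      simp at hv
  · rintro ⟨hi, v, hv, hred⟩
    refine ⟨v, ?_, hred⟩
    rw [show (Term.app g ts).subtermAt (i :: p)
      = if h : i < ar g then (ts ⟨i, h⟩).subtermAt p else none from rfl]
    rw [dif_pos hi]
    exact hv

lemma TRS.not_redexPos_var (S : TRS F ar) (n : ℕ) {i : ℕ} {p : List ℕ} :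
    ¬ S.RedexPos (Term.var n) (i :: p) := by
  rintro ⟨v, hv, -⟩
  simp [Term.subtermAt] at hv

end RedexLemmas

section QrLemmas

open Term

variable {F : Type} [Fintype F] {ar : F → ℕ} {Q : Type} [Fintype Q]
  {T : Set (Term (Option F) (arB ar))}

/-- Instance of a nonvariable pattern from a `Γ'`-run to `⟪w⟫`. -/
lemma binst2 {R : TRS F ar} (hll : R.liftB.LeftLinear) (C : CpSetup Q R.liftB T) :
    ∀ w : Term (Option F) (arB ar), w ∈ SR R.liftB → ∀ t : Term (Option F) (arB ar),
      Reaches C.Γ' t (C.enc2 (stPattern w)) → ∃ σ, t = w.subst σ := by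
  intro w
  induction w with
  | var n => exact fun _ t _ => ⟨fun _ => t, rfl⟩
  | app f ws ih =>
      intro hw t h
      rw [stPattern_app] at h
      cases h with
      | app hts hrule =>
          rename_i g tsT qs
          rcases hrule with ((hsat | hm) | hrr) | hqp
          · exact absurd ((C.toCSetup.good_Γsat _ hsat).1)
              (C.enc2_app_not_mem_Qstates (app_mem_BStateSet hw))
          · obtain ⟨f1, ts1, hSR1, heq⟩ := hm
            obtain rfl : g = f1 := congrArg Sigma.fst heq
            obtain ⟨hargs, htgt⟩ := tarule_snd_eq heq
            have : Term.app f ws = Term.app g ts1 :=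
              C.henc2 (app_mem_BStateSet hw) (app_mem_BStateSet hSR1) htgt
            obtain ⟨rfl, hws⟩ := Term.app.injEq .. |>.mp this
            obtain rfl : ws = ts1 := eq_of_heq hws
            have hch : ∀ i, ∃ σ, tsT i = (ws i).subst σ := by
              intro i
              refine ih i (SR_child hw i) (tsT i) ?_
              have := hts i
              rwa [hargs] at this
            obtain ⟨σ, hσ⟩ := exists_subst_combine (SR_linear hll hw) tsT hch
            refine ⟨σ, ?_⟩
            simp only [Term.subst]
            congr 1
            funext i
            exact hσ i
          · exfalso
            obtain ⟨f1, ls1, r1, -, heq⟩ := hrr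
            obtain rfl : g = f1 := congrArg Sigma.fst heq
            exact C.qr_ne_enc2_app (app_mem_BStateSet hw) (tarule_snd_eq heq).2.symm
          · exfalso
            obtain ⟨f1, j, heq⟩ := hqp
            obtain rfl : g = f1 := congrArg Sigma.fst heq
            exact C.qr_ne_enc2_app (app_mem_BStateSet hw) (tarule_snd_eq heq).2.symm

/-- Core argument: if all (lifted) arguments of a left-hand side are matched by the
children, the term is a redex. -/
lemma redex_core {R : TRS F ar} (hlin : R.IsLinear) (C : CpSetup Q R.liftB T)
    {g : F} {us : Fin (ar g) → Term F ar} {ts0 : Fin (ar g) → Term F ar}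
    {r0 : Term F ar} (hmem : (Term.app g ts0, r0) ∈ R.rules)
    (h : ∀ i : Fin (ar g),
      Reaches C.Γ' (liftB (us i)) (C.enc2 (stPattern (liftB (ts0 i))))) :
    R.IsRedex (Term.app g us) := by
  have hll : R.liftB.LeftLinear := liftB_leftLinear hlin
  have hruleL : (Term.app (some g) (fun i => liftB (ts0 i)), liftB r0)
      ∈ R.liftB.rules := by
    have := liftB_rules_mem hmem
    rwa [liftB_app] at this
  have hch : ∀ i : Fin (ar g), ∃ τ, liftB (us i) = (liftB (ts0 i)).subst τ := by
    intro i
    cases hts0 : ts0 i with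
    | var m => exact ⟨fun _ => liftB (us i), rfl⟩
    | app g2 ss =>
        have hSRi : Term.app (some g2) (fun j => liftB (ss j)) ∈ SR R.liftB := by
          simpa only [hts0, liftB_app] using SR_lhs_arg hruleL i
        have hrun : Reaches C.Γ' (liftB (us i))
            (C.enc2 (stPattern (Term.app (some g2) (fun j => liftB (ss j))))) := by
          have := h i
          rwa [hts0, liftB_app] at this
        obtain ⟨τ, hτ⟩ := binst2 hll C _ hSRi _ hrun
        rw [liftB_app]
        exact ⟨τ, hτ⟩
  have hlinl : (Term.app (some g) (fun i => liftB (ts0 i))).Linear := by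
    have := liftB_linear (hlin.1 (Term.app g ts0, r0) hmem)
    rwa [liftB_app] at this
  obtain ⟨σG, hσG⟩ := exists_subst_combine hlinl (fun i => liftB (us i)) hch
  have hlift : liftB (Term.app g us)
      = (liftB (Term.app g ts0)).subst σG := by
    rw [liftB_app, liftB_app]
    simp only [Term.subst]
    congr 1
    funext i
    exact hσG i
  obtain ⟨σF, hσF⟩ := exists_of_liftB_subst (hlin.1 (Term.app g ts0, r0) hmem)
    (Term.app g us) σG hlift
  exact ⟨(Term.app g ts0, r0), hmem, σF, hσF⟩

/-- Characterization of the terms reaching `q_r`: the reducible ones. -/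
lemma reaches_qr_of_redexPos {R : TRS F ar} (C : CpSetup Q R.liftB T) :
    ∀ (p : List ℕ) (u : Term F ar), u.Ground → R.RedexPos u p →
      Reaches C.Γ' (liftB u) C.qr := by
  intro p
  induction p with
  | nil =>
      intro u hg h
      rw [TRS.redexPos_nil_iff] at h
      obtain ⟨⟨l, r⟩, hlr, σ, hu⟩ := h
      cases hl : l with
      | var m => exact absurd hl (R.lhs_not_var (l, r) hlr m)
      | app g ts0 =>
          subst hl
          have hruleL : (Term.app (some g) (fun i => liftB (ts0 i)), liftB r)
              ∈ R.liftB.rules := by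
            have := liftB_rules_mem hlr
            rwa [liftB_app] at this
          have hrule : (⟨some g, fun i => C.enc2 (stPattern (liftB (ts0 i))), C.qr⟩ :
              TARule (Option F) (arB ar) Q) ∈ RedexRules R.liftB C.enc2 C.qr :=
            ⟨some g, fun i => liftB (ts0 i), liftB r, hruleL, rfl⟩
          have hgu : (liftB u).Ground := liftB_ground hg
          rw [hu, liftB_subst, liftB_app] at hgu ⊢
          have hgu' : (Term.app (some g)
              (fun i => (liftB (ts0 i)).subst (fun n => liftB (σ n)))).Ground := hgu
          have hch : ∀ i : Fin (ar g), Reaches C.Γ'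
              ((liftB (ts0 i)).subst (fun n => liftB (σ n)))
              (C.enc2 (stPattern (liftB (ts0 i)))) := by
            intro i
            have := inst_run (Rg := R.liftB) (enc := C.enc) (enc' := C.enc2)
              C.BMatch2_le_Γ' C.BProp_le_Γ' C.hx (liftB (ts0 i)) (SR_lhs_arg hruleL i)
              (fun n => liftB (σ n))
            exact this.toReaches (Term.ground_app.mp hgu' i)
          show Reaches C.Γ'
            (Term.app (some g) (fun i => (liftB (ts0 i)).subst (fun n => liftB (σ n)))) C.qr
          exact Reaches.app hch (C.RedexRules_le_Γ' hrule)
  | cons i p ih =>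
      intro u hg h
      cases u with
      | var n => exact absurd h (R.not_redexPos_var n)
      | app g us =>
          rw [TRS.redexPos_cons_iff] at h
          obtain ⟨hi, hp⟩ := h
          have hchild := ih (us ⟨i, hi⟩) (Term.ground_app.mp hg _) hp
          have hrule : (⟨some g, fun j => if j = ⟨i, hi⟩ then C.qr
              else C.enc (Term.var 0), C.qr⟩ : TARule (Option F) (arB ar) Q)
              ∈ QrProp C.enc C.qr := ⟨some g, ⟨i, hi⟩, rfl⟩
          rw [liftB_app]
          have hch : ∀ j : Fin (ar g), Reaches C.Γ' (liftB (us j))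
              (if j = ⟨i, hi⟩ then C.qr else C.enc (Term.var 0)) := by
            intro j
            by_cases hj : j = ⟨i, hi⟩
            · rw [if_pos hj, hj]
              exact hchild
            · rw [if_neg hj]
              exact reaches_to_x C.BProp_le_Γ' (liftB_ground (Term.ground_app.mp hg j))
          exact Reaches.app hch (C.QrProp_le_Γ' hrule)

lemma reducible_of_reaches_qr {R : TRS F ar} (hlin : R.IsLinear)
    (C : CpSetup Q R.liftB T) :
    ∀ {t : Term (Option F) (arB ar)} {q : Q}, Reaches C.Γ' t q → q = C.qr →
      ∀ u : Term F ar, t = liftB u → R.Reducible u := by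
  intro t q h
  induction h with
  | app hts hrule ih =>
      rename_i gG tsG qs qtgt
      intro hq u htu
      subst hq
      cases u with
      | var n => exact absurd (htu.trans (liftB_var n)) (by simp)
      | app g0 us =>
          rw [liftB_app] at htu
          obtain ⟨rfl, htsG⟩ := Term.app.injEq .. |>.mp htu
          obtain rfl : tsG = fun i => liftB (us i) := eq_of_heq htsG
          rcases hrule with ((hsat | hm) | hrr) | hqp
          · exact absurd ((C.toCSetup.good_Γsat _ hsat).1) C.qr_not_mem_Qstates
          · obtain ⟨f1, ts1, hSR1, heq⟩ := hm
            obtain rfl : some g0 = f1 := congrArg Sigma.fst heq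
            exact absurd (tarule_snd_eq heq).2
              (C.qr_ne_enc2_app (app_mem_BStateSet hSR1))
          · obtain ⟨f1, ls1, r1, hrule1, heq⟩ := hrr
            obtain rfl : some g0 = f1 := congrArg Sigma.fst heq
            obtain ⟨hqs, -⟩ := tarule_snd_eq heq
            obtain ⟨l0, r0, hmemR, heqR⟩ := liftB_rules_elim hrule1
            have hfst : Term.app (some g0) ls1 = liftB l0 := congrArg Prod.fst heqR
            cases hl0 : l0 with
            | var m => exact absurd hl0 (R.lhs_not_var (l0, r0) hmemR m)
            | app g1 ts0 =>
                subst hl0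
                rw [liftB_app] at hfst
                obtain ⟨hg01, hls⟩ := Term.app.injEq .. |>.mp hfst
                obtain rfl : g0 = g1 := Option.some.inj hg01
                obtain rfl : ls1 = fun i => liftB (ts0 i) := eq_of_heq hls
                refine ⟨[], (R.redexPos_nil_iff _).mpr ?_⟩
                refine redex_core hlin C hmemR (fun i => ?_)
                have := hts i
                rw [hqs] at this
                simpa using this
          · obtain ⟨f1, j, heq⟩ := hqp
            obtain rfl : some g0 = f1 := congrArg Sigma.fst heq
            obtain ⟨hqs, -⟩ := tarule_snd_eq heq
            have hq' : qs j = C.qr := by rw [hqs]; simp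
            obtain ⟨p, hp⟩ := ih j hq' (us j) rfl
            exact ⟨(j : ℕ) :: p, TRS.redexPos_child R hp⟩

/-- `LhsMatch` at a node characterizes root redexes. -/
lemma lhsMatch_of_redex {R : TRS F ar} (C : CpSetup Q R.liftB T)
    {g : F} {us : Fin (ar g) → Term F ar} (hg : ∀ i, (us i).Ground)
    (h : R.IsRedex (Term.app g us)) :
    LhsMatch R.liftB C.enc2 (some g) (fun i => dn C.Γ' (liftB (us i))) := by
  obtain ⟨⟨l, r⟩, hlr, σ, hu⟩ := h
  cases hl : l with
  | var m => exact absurd hl (R.lhs_not_var (l, r) hlr m)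
  | app g1 ts0 =>
      subst hl
      simp only [Term.subst] at hu
      obtain ⟨rfl, hus⟩ := Term.app.injEq .. |>.mp hu
      obtain rfl : us = fun i => (ts0 i).subst σ := eq_of_heq hus
      have hruleL : (Term.app (some g) (fun i => liftB (ts0 i)), liftB r)
          ∈ R.liftB.rules := by
        have := liftB_rules_mem hlr
        rwa [liftB_app] at this
      refine ⟨fun i => liftB (ts0 i), liftB r, hruleL, fun i => ?_⟩
      show Reaches C.Γ' (liftB ((ts0 i).subst σ)) (C.enc2 (stPattern (liftB (ts0 i))))
      rw [liftB_subst]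
      have := inst_run (Rg := R.liftB) (enc := C.enc) (enc' := C.enc2)
        C.BMatch2_le_Γ' C.BProp_le_Γ' C.hx (liftB (ts0 i)) (SR_lhs_arg hruleL i)
        (fun n => liftB (σ n))
      refine this.toReaches ?_
      rw [← liftB_subst]
      exact liftB_ground (hg i)

lemma redex_of_lhsMatch {R : TRS F ar} (hlin : R.IsLinear) (C : CpSetup Q R.liftB T)
    {g : F} {us : Fin (ar g) → Term F ar}
    (h : LhsMatch R.liftB C.enc2 (some g) (fun i => dn C.Γ' (liftB (us i)))) :
    R.IsRedex (Term.app g us) := by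
  obtain ⟨ls, r, hrule, hmem⟩ := h
  obtain ⟨l0, r0, hmemR, heqR⟩ := liftB_rules_elim hrule
  have hfst : Term.app (some g) ls = liftB l0 := congrArg Prod.fst heqR
  cases hl0 : l0 with
  | var m => exact absurd hl0 (R.lhs_not_var (l0, r0) hmemR m)
  | app g1 ts0 =>
      subst hl0
      rw [liftB_app] at hfst
      obtain ⟨hg01, hls⟩ := Term.app.injEq .. |>.mp hfst
      obtain rfl : g = g1 := Option.some.inj hg01
      obtain rfl : ls = fun i => liftB (ts0 i) := eq_of_heq hls
      exact redex_core hlin C hmemR (fun i => hmem i)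

end QrLemmas
section DSound

open Term

variable {F : Type} [Fintype F] {ar : F → ℕ} {Q : Type} [Fintype Q]
  {T : Set (Term (Option F) (arB ar))}

lemma dn_liftB_app {Γ : Set (TARule (Option F) (arB ar) Q)} (g : F)
    (us : Fin (ar g) → Term F ar) :
    dn Γ (liftB (Term.app g us)) = oneStep Γ (some g) (fun i => dn Γ (liftB (us i))) := by
  rw [liftB_app]
  exact dn_app (some g) (fun i => liftB (us i))

lemma liftB_replace_cons {g : F} {us : Fin (ar g) → Term F ar} {i : ℕ} (hi : i < ar g)
    {p : List ℕ} {v w' : Term (Option F) (arB ar)}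
    (h : (liftB (us ⟨i, hi⟩)).replaceAt p v = some w') :
    (liftB (Term.app g us)).replaceAt (i :: p) v
      = some (Term.app (some g) (Function.update (fun j => liftB (us j)) ⟨i, hi⟩ w')) := by
  rw [liftB_app]
  show (if h2 : i < ar g then
      (((fun j => liftB (us j)) ⟨i, h2⟩).replaceAt p v).map
        (fun s => Term.app (some g) (Function.update (fun j => liftB (us j)) ⟨i, h2⟩ s))
    else none) = _
  rw [dif_pos hi]
  show ((liftB (us ⟨i, hi⟩)).replaceAt p v).map _ = _
  rw [h]
  rfl

lemma Dsound {R : TRS F ar} (hlin : R.IsLinear) (C : CpSetup Q R.liftB T) :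
    ∀ {u : Term F ar} {SP : Set Q × Set Q},
      Reaches (DTrans R.liftB C.Γ' C.enc C.enc2) u SP → u.Ground →
      SP.1 = dn C.Γ' (liftB u) ∧
      ∀ p, R.RedexPos u p → ∃ q ∈ SP.2, ∃ w,
        (liftB u).replaceAt p bulletTm = some w ∧ Reaches C.Γ' w q := by
  intro u SP h
  induction h with
  | app hts hrule ih =>
      rename_i g tsD SPs SP
      intro hg
      obtain ⟨f', SPc, P1, P2, hP1sub, hcov, hP2, ρeq⟩ := hrule
      obtain rfl : g = f' := congrArg Sigma.fst ρeq
      obtain ⟨hqs, rfl⟩ := tarule_snd_eq ρeq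
      subst hqs
      have ihs : ∀ i, (SPs i).1 = dn C.Γ' (liftB (tsD i)) ∧
          ∀ p, R.RedexPos (tsD i) p → ∃ q ∈ (SPs i).2, ∃ w,
            (liftB (tsD i)).replaceAt p bulletTm = some w ∧ Reaches C.Γ' w q :=
        fun i => ih i (Term.ground_app.mp hg i)
      have hfun : (fun i : Fin (arB ar (some g)) => (SPs i).1)
          = fun i => dn C.Γ' (liftB (tsD i)) :=
        funext (fun i => (ihs i).1)
      constructor
      · show oneStep C.Γ' (some g) (fun i => (SPs i).1) = _
        rw [dn_liftB_app, hfun]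
        rfl
      · intro p hp
        show ∃ q ∈ P1 ∪ P2, _
        cases p with
        | nil =>
            rw [TRS.redexPos_nil_iff] at hp
            have hLM : LhsMatch R.liftB C.enc2 (some g) (fun i => (SPs i).1) := by
              rw [hfun]
              exact lhsMatch_of_redex C (Term.ground_app.mp hg) hp
            rcases hP2 with ⟨-, hP2eq⟩ | ⟨hnLM, -⟩
            · refine ⟨C.enc (Term.var 0), Or.inr (by rw [hP2eq]; rfl), bulletTm, ?_, ?_⟩
              · rw [liftB_app]; rfl
              · exact reaches_to_x C.BProp_le_Γ' bullet_ground
            · exact absurd hLM hnLM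
        | cons i p' =>
            rw [TRS.redexPos_cons_iff] at hp
            obtain ⟨hi, hp'⟩ := hp
            obtain ⟨qi, hqi2, wi, hwi, hruni⟩ := (ihs ⟨i, hi⟩).2 p' hp'
            obtain ⟨q, hq1, hqstep⟩ := hcov ⟨i, hi⟩ qi hqi2
            obtain ⟨qs', hqs', hrule'⟩ := hqstep
            refine ⟨q, Or.inl hq1,
              Term.app (some g) (Function.update (fun j => liftB (tsD j)) ⟨i, hi⟩ wi),
              liftB_replace_cons hi hwi, ?_⟩
            have hch : ∀ j, Reaches C.Γ'
                (Function.update (fun j => liftB (tsD j)) ⟨i, hi⟩ wi j) (qs' j) := by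
              intro j
              rcases eq_or_ne j ⟨i, hi⟩ with rfl | hne
              · rw [Function.update_self]
                have h5 : qs' ⟨i, hi⟩ ∈ ({qi} : Set Q) := by
                  have h6 := hqs' ⟨i, hi⟩
                  beta_reduce at h6
                  split_ifs at h6 with hc
                  · exact h6
                  · exact absurd rfl hc
                rw [Set.mem_singleton_iff] at h5
                erw [h5]
                exact hruni
              · rw [Function.update_of_ne hne]
                have h5 : qs' j ∈ (SPs j).1 := by
                  have h6 := hqs' j
                  beta_reduce at h6
                  split_ifs at h6 with hc
                  · exact absurd hc hne
                  · exact h6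
                rw [(ihs j).1] at h5
                exact h5
            exact Reaches.app hch hrule'

end DSound
section DComplete

open Term

variable {F : Type} [Fintype F] {ar : F → ℕ} {Q : Type} [Fintype Q]
  {T : Set (Term (Option F) (arB ar))}

lemma reachesT_var_inv {G : Type} {arG : G → ℕ} {Δ : Set (TARule G arG Q)}
    {θ : ℕ → Q} {n : ℕ} {q : Q} (h : ReachesT Δ θ (Term.var n) q) : q = θ n := by
  cases h
  rfl

lemma replaceAt_nil (t v : Term F ar) : t.replaceAt [] v = some v := by
  cases t <;> rfl

/-- Decomposition of a witness run for a non-root redex position at the root symbol. -/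
lemma decompW {R : TRS F ar} (C : CpSetup Q R.liftB T) {g : F}
    {us : Fin (ar g) → Term F ar} (hgr : ∀ j, (us j).Ground) (i : Fin (ar g))
    (p' : List ℕ) {q : Q} {w : Term (Option F) (arB ar)}
    (hrp : R.RedexPos (Term.app g us) ((i : ℕ) :: p'))
    (hrep : (liftB (Term.app g us)).replaceAt ((i : ℕ) :: p') (Term.var 0) = some w)
    (hrun : ReachesT C.Γ' (fun _ => C.enc (Term.var 0)) w q) :
    ∃ qs : Fin (arB ar (some g)) → Q,
      (⟨some g, qs, q⟩ : TARule (Option F) (arB ar) Q) ∈ C.Γ' ∧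
      (∀ j, j ≠ i → Reaches C.Γ' (liftB (us j)) (qs j)) ∧
      R.RedexPos (us i) p' ∧
      ((p' = [] ∧ qs i = C.enc (Term.var 0)) ∨
       (p' ≠ [] ∧ ∃ w', (liftB (us i)).replaceAt p' (Term.var 0) = some w' ∧
          ReachesT C.Γ' (fun _ => C.enc (Term.var 0)) w' (qs i))) := by
  rw [TRS.redexPos_cons_iff] at hrp
  obtain ⟨hi, hrp'⟩ := hrp
  have hieq : (⟨(i : ℕ), hi⟩ : Fin (ar g)) = i := Fin.eta i hi
  rw [hieq] at hrp'
  rw [liftB_app] at hrep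
  have hrep2 : (if h : (i : ℕ) < ar g then
      (((fun j => liftB (us j)) ⟨(i : ℕ), h⟩).replaceAt p' (Term.var 0)).map
        (fun s => Term.app (some g)
          (Function.update (fun j => liftB (us j)) ⟨(i : ℕ), h⟩ s))
    else none) = some w := hrep
  rw [dif_pos hi] at hrep2
  simp only [hieq] at hrep2
  rw [Option.map_eq_some_iff] at hrep2
  obtain ⟨w', hw', rfl⟩ := hrep2
  cases hrun with
  | app hts hrule =>
      rename_i qs
      refine ⟨qs, hrule, ?_, hrp', ?_⟩
      · intro j hj
        have := hts j
        erw [Function.update_of_ne hj] at this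
        exact this.toReaches (liftB_ground (hgr j))
      · have hchild := hts i
        erw [Function.update_self] at hchild
        cases hp' : p' with
        | nil =>
            left
            refine ⟨rfl, ?_⟩
            rw [hp'] at hw'
            rw [replaceAt_nil] at hw'
            cases Option.some.inj hw'
            exact reachesT_var_inv hchild
        | cons a p'' =>
            right
            exact ⟨by simp [hp'], w', by rw [← hp']; exact hw', hchild⟩

/-- Reconstruction of a witness run from child data. -/
lemma reconstructW {R : TRS F ar} (C : CpSetup Q R.liftB T) {g : F}
    {us : Fin (ar g) → Term F ar} (hgr : ∀ j, (us j).Ground) (i : Fin (ar g))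
    (p' : List ℕ) {q : Q} {qs : Fin (arB ar (some g)) → Q}
    (hrule : (⟨some g, qs, q⟩ : TARule (Option F) (arB ar) Q) ∈ C.Γ')
    (hsib : ∀ j, j ≠ i → Reaches C.Γ' (liftB (us j)) (qs j))
    (hrp' : R.RedexPos (us i) p')
    (hdisj : (p' = [] ∧ qs i = C.enc (Term.var 0)) ∨
       (p' ≠ [] ∧ ∃ w', (liftB (us i)).replaceAt p' (Term.var 0) = some w' ∧
          ReachesT C.Γ' (fun _ => C.enc (Term.var 0)) w' (qs i))) :
    R.RedexPos (Term.app g us) ((i : ℕ) :: p') ∧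
    ∃ w, (liftB (Term.app g us)).replaceAt ((i : ℕ) :: p') (Term.var 0) = some w ∧
      ReachesT C.Γ' (fun _ => C.enc (Term.var 0)) w q := by
  have hieq : (⟨(i : ℕ), i.isLt⟩ : Fin (ar g)) = i := Fin.eta i i.isLt
  constructor
  · rw [TRS.redexPos_cons_iff]
    exact ⟨i.isLt, by rw [hieq]; exact hrp'⟩
  · -- choose the replaced child
    obtain ⟨w0, hrep0, hrun0⟩ : ∃ w0, (liftB (us i)).replaceAt p' (Term.var 0) = some w0 ∧
        ReachesT C.Γ' (fun _ => C.enc (Term.var 0)) w0 (qs i) := by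
      rcases hdisj with ⟨rfl, hqsx⟩ | ⟨-, w', hrep', hrun'⟩
      · refine ⟨Term.var 0, replaceAt_nil _ _, ?_⟩
        rw [hqsx]
        exact ReachesT.var 0
      · exact ⟨w', hrep', hrun'⟩
    refine ⟨Term.app (some g) (Function.update (fun j => liftB (us j)) ⟨(i : ℕ), i.isLt⟩ w0),
      liftB_replace_cons i.isLt (by rw [hieq]; exact hrep0), ?_⟩
    refine ReachesT.app (fun j => ?_) hrule
    rcases eq_or_ne j i with rfl | hne
    · erw [show (⟨(j : ℕ), j.isLt⟩ : Fin (ar g)) = j from Fin.eta j j.isLt,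
        Function.update_self]
      exact hrun0
    · erw [Function.update_of_ne (by exact hne)]
      exact (hsib j hne).toT _

lemma Dcomplete {R : TRS F ar} (hlin : R.IsLinear) (C : CpSetup Q R.liftB T) :
    ∀ u : Term F ar, u.Ground → ∀ P : Set Q,
      (∀ q ∈ P, (q = C.enc (Term.var 0) ∧ R.RedexPos u []) ∨
        ∃ p, p ≠ [] ∧ R.RedexPos u p ∧ ∃ w, (liftB u).replaceAt p (Term.var 0) = some w ∧
          ReachesT C.Γ' (fun _ => C.enc (Term.var 0)) w q) →
      (R.RedexPos u [] → C.enc (Term.var 0) ∈ P) →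
      (∀ p, p ≠ [] → R.RedexPos u p → ∃ q ∈ P, R.RedexPos u p ∧
        ∃ w, (liftB u).replaceAt p (Term.var 0) = some w ∧
          ReachesT C.Γ' (fun _ => C.enc (Term.var 0)) w q) →
      Reaches (DTrans R.liftB C.Γ' C.enc C.enc2) u (dn C.Γ' (liftB u), P) := by
  classical
  intro u
  induction u with
  | var n => exact fun hg => absurd hg (Term.not_ground_var n)
  | app g us ihu =>
      intro hg P h1 h2 h3
      have hgr : ∀ j, (us j).Ground := Term.ground_app.mp hg
      -- the children state sets
      set Pc : Fin (ar g) → Set Q := fun i =>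
        { qi | (qi = C.enc (Term.var 0) ∧ R.RedexPos (us i) []) ∨
            ∃ (p' : List ℕ) (q : Q) (qs : Fin (arB ar (some g)) → Q),
              q ∈ P ∧ (⟨some g, qs, q⟩ : TARule (Option F) (arB ar) Q) ∈ C.Γ' ∧
              (∀ j, j ≠ i → Reaches C.Γ' (liftB (us j)) (qs j)) ∧ qs i = qi ∧
              R.RedexPos (us i) p' ∧
              ((p' = [] ∧ qi = C.enc (Term.var 0)) ∨
               (p' ≠ [] ∧ ∃ w', (liftB (us i)).replaceAt p' (Term.var 0) = some w' ∧
                  ReachesT C.Γ' (fun _ => C.enc (Term.var 0)) w' qi)) } with hPc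
      set SPc : Fin (ar g) → Set Q × Set Q :=
        fun i => (dn C.Γ' (liftB (us i)), Pc i) with hSPc
      set P1 : Set Q := { q ∈ P | ∃ p, p ≠ [] ∧ R.RedexPos (Term.app g us) p ∧
        ∃ w, (liftB (Term.app g us)).replaceAt p (Term.var 0) = some w ∧
          ReachesT C.Γ' (fun _ => C.enc (Term.var 0)) w q } with hP1
      -- children runs by induction
      have hchildren : ∀ i, Reaches (DTrans R.liftB C.Γ' C.enc C.enc2) (us i)
          (dn C.Γ' (liftB (us i)), Pc i) := by
        intro i
        refine ihu i (hgr i) (Pc i) ?_ ?_ ?_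
        · -- h1 for the child
          rintro qi (⟨hqi, hrp⟩ | ⟨p', q, qs, hqP, hrule, hsib, hqsi, hrp', hdisj⟩)
          · exact Or.inl ⟨hqi, hrp⟩
          · rcases hdisj with ⟨rfl, hqix⟩ | ⟨hne, w', hrep', hrun'⟩
            · exact Or.inl ⟨hqix, hrp'⟩
            · exact Or.inr ⟨p', hne, hrp', w', hrep', hrun'⟩
        · -- h2 for the child
          intro hrp
          exact Or.inl ⟨rfl, hrp⟩
        · -- h3 for the child
          intro p' hne hrp'
          have hrpu : R.RedexPos (Term.app g us) ((i : ℕ) :: p') := by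
            rw [TRS.redexPos_cons_iff]
            exact ⟨i.isLt, by rw [Fin.eta i i.isLt]; exact hrp'⟩
          obtain ⟨q, hqP, -, w, hrep, hrun⟩ := h3 ((i : ℕ) :: p') (by simp) hrpu
          obtain ⟨qs, hrule, hsib, hrpc, hdisj⟩ := decompW C hgr i p' hrpu hrep hrun
          refine ⟨qs i, Or.inr ⟨p', q, qs, hqP, hrule, hsib, rfl, hrpc, ?_⟩, hrpc, ?_⟩
          · rcases hdisj with ⟨hpe, hq⟩ | ⟨hpn, hw⟩
            · exact Or.inl ⟨hpe, hq⟩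
            · exact Or.inr ⟨hpn, hw⟩
          · rcases hdisj with ⟨rfl, -⟩ | ⟨-, w', hrep', hrun'⟩
            · exact absurd rfl hne
            · exact ⟨w', hrep', hrun'⟩
      -- P1 is contained in the union required by the transition
      have hP1sub : P1 ⊆ ⋃ i : Fin (ar g), oneStep C.Γ' (some g)
          (fun j => if j = i then (SPc j).2 else (SPc j).1) := by
        rintro q ⟨hqP, p, hpne, hrp, w, hrep, hrun⟩
        cases p with
        | nil => exact absurd rfl hpne
        | cons a p' =>
            obtain ⟨ha, -⟩ := (TRS.redexPos_cons_iff R).mp hrp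
            obtain ⟨qs, hrule, hsib, hrpc, hdisj⟩ :=
              decompW C hgr ⟨a, ha⟩ p' hrp hrep hrun
            refine Set.mem_iUnion.mpr ⟨⟨a, ha⟩, qs, fun j => ?_, hrule⟩
            by_cases hj : j = (⟨a, ha⟩ : Fin (ar g))
            · simp only [if_pos hj]
              rw [hj]
              show qs (⟨a, ha⟩ : Fin (ar g)) ∈ Pc ⟨a, ha⟩
              rcases hdisj with ⟨rfl, hqx⟩ | hdeep
              · exact Or.inl ⟨hqx, hrpc⟩
              · exact Or.inr ⟨p', q, qs, hqP, hrule, hsib, rfl, hrpc, Or.inr hdeep⟩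
            · simp only [if_neg hj]
              show qs j ∈ dn C.Γ' (liftB (us j))
              exact hsib j hj
      -- the covering condition
      have hcov : ∀ i : Fin (ar g), ∀ qi ∈ (SPc i).2,
          (P1 ∩ oneStep C.Γ' (some g)
            (fun j => if j = i then {qi} else (SPc j).1)).Nonempty := by
        intro i qi hqi
        have hqi' : qi ∈ Pc i := by
          simp only [hSPc] at hqi
          exact hqi
        rcases hqi' with ⟨hqix, hrp0⟩ | ⟨p', q, qs, hqP, hrule, hsib, hqsi, hrp', hdisj⟩
        · -- qi = ⟨x⟩ because the child has a root redex
          have hrpu : R.RedexPos (Term.app g us) [(i : ℕ)] := by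
            rw [TRS.redexPos_cons_iff]
            exact ⟨i.isLt, by rw [Fin.eta i i.isLt]; exact hrp0⟩
          obtain ⟨q, hqP, -, w, hrep, hrun⟩ := h3 [(i : ℕ)] (by simp) hrpu
          obtain ⟨qs, hrule, hsib, hrpc, hdisj⟩ := decompW C hgr i [] hrpu hrep hrun
          have hqsx : qs i = C.enc (Term.var 0) := by
            rcases hdisj with ⟨-, h⟩ | ⟨hne, -⟩
            · exact h
            · exact absurd rfl hne
          refine ⟨q, ⟨hqP, [(i : ℕ)], by simp, hrpu, w, hrep, hrun⟩, qs, fun j => ?_, hrule⟩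
          by_cases hj : j = i
          · simp only [if_pos hj, Set.mem_singleton_iff]
            rw [hj, hqix]
            exact hqsx
          · simp only [if_neg hj]
            show qs j ∈ dn C.Γ' (liftB (us j))
            exact hsib j hj
        · -- a deep element of the child: reconstruct the parent witness
          rw [← hqsi] at hdisj
          obtain ⟨hrpu, w, hrep, hrun⟩ := reconstructW C hgr i p' hrule hsib hrp' hdisj
          refine ⟨q, ⟨hqP, (i : ℕ) :: p', by simp, hrpu, w, hrep, hrun⟩,
            qs, fun j => ?_, hrule⟩
          by_cases hj : j = i
          · simp only [if_pos hj, Set.mem_singleton_iff]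
            rw [hj]
            exact hqsi
          · simp only [if_neg hj]
            show qs j ∈ dn C.Γ' (liftB (us j))
            exact hsib j hj
      -- the second component of the state
      obtain ⟨P2, hP2or, hP2P⟩ : ∃ P2 : Set Q,
          ((LhsMatch R.liftB C.enc2 (some g) (fun i => (SPc i).1) ∧
              P2 = {C.enc (Term.var 0)}) ∨
           (¬ LhsMatch R.liftB C.enc2 (some g) (fun i => (SPc i).1) ∧
              P2 = (∅ : Set Q))) ∧ P1 ∪ P2 = P := by
        by_cases hroot : R.RedexPos (Term.app g us) []
        · refine ⟨{C.enc (Term.var 0)}, Or.inl ⟨?_, rfl⟩, ?_⟩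
          · exact lhsMatch_of_redex C hgr ((R.redexPos_nil_iff _).mp hroot)
          · apply Set.eq_of_subset_of_subset
            · rintro q (hq | hq)
              · exact hq.1
              · rw [Set.mem_singleton_iff] at hq
                subst hq
                exact h2 hroot
            · intro q hq
              rcases h1 q hq with ⟨rfl, -⟩ | ⟨p, hpne, hrp, w, hrep, hrun⟩
              · exact Or.inr rfl
              · exact Or.inl ⟨hq, p, hpne, hrp, w, hrep, hrun⟩
        · refine ⟨∅, Or.inr ⟨?_, rfl⟩, ?_⟩
          · intro hLM
            exact hroot ((R.redexPos_nil_iff _).mpr (redex_of_lhsMatch hlin C hLM))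
          · rw [Set.union_empty]
            apply Set.eq_of_subset_of_subset
            · exact fun q hq => hq.1
            · intro q hq
              rcases h1 q hq with ⟨-, hrp⟩ | ⟨p, hpne, hrp, w, hrep, hrun⟩
              · exact absurd hrp hroot
              · exact ⟨hq, p, hpne, hrp, w, hrep, hrun⟩
      -- assemble the run
      have hrule : (⟨g, SPc, (oneStep C.Γ' (some g) (fun i => (SPc i).1), P1 ∪ P2)⟩ :
          TARule F ar (Set Q × Set Q)) ∈ DTrans R.liftB C.Γ' C.enc C.enc2 :=
        ⟨g, SPc, P1, P2, by convert hP1sub, by convert hcov, hP2or, rfl⟩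
      have hrun := Reaches.app (fun i => hchildren i) hrule
      have hstate : (oneStep C.Γ' (some g) (fun i => (SPc i).1), P1 ∪ P2)
          = (dn C.Γ' (liftB (Term.app g us)), P) := by
        rw [dn_liftB_app, hP2P]
      rw [hstate] at hrun
      exact hrun

end DComplete
/-- Let `ℛ` be a linear growing TRS over `𝓕` and `𝒟(ℛ)` the
powerset-pair automaton built from `𝒞'_{NF_{ℛ•}}(ℛ)`.  For every `s ∈ 𝒯(𝓕)`:
`s ∈ L(𝒟(ℛ))` iff `s` is reducible with respect to `ℛ` and
`s[•]_p ∈ (→_ℛ*)[NF_{ℛ•}]` for every redex position `p` of `s`. -/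
theorem statement11 {F : Type} [Fintype F] {ar : F → ℕ} {Q : Type} [Fintype Q]
    (R : TRS F ar) (hlin : R.IsLinear) (hgrow : R.Growing)
    (C : CpSetup Q R.liftB (TRS.NFset R.bullet))
    (s : Term F ar) (hs : s.Ground) :
    s ∈ Lang (DAutomaton R.liftB C.Γ' C.enc C.enc2 C.qr C.A.final) ↔
      (R.Reducible s ∧ ∀ p, R.RedexPos s p →
        ∃ u, (liftB s).replaceAt p bulletTm = some u ∧
          ∃ t ∈ TRS.NFset R.bullet, RewritesStar R.liftB.rules u t) := by
  constructor
  · rintro ⟨hgs, SP, hfin, hrun⟩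
    obtain ⟨hqr, hPQf⟩ := hfin
    obtain ⟨hS, hcov⟩ := Dsound hlin C hrun hs
    constructor
    · rw [hS] at hqr
      exact reducible_of_reaches_qr hlin C hqr rfl s rfl
    · intro p hp
      obtain ⟨q, hqP, w, hrep, hrunw⟩ := hcov p hp
      refine ⟨w, hrep, ?_⟩
      have hqQf : q ∈ C.A.final := hPQf hqP
      have hwg : w.Ground := Term.ground_replaceAt (liftB_ground hs) bullet_ground hrep
      have hq' : q ∈ C.toCSetup.Qstates := C.toCSetup.QA_le_Qstates (C.hfinal hqQf)
      have hsat := C.reaches_restrict hrunw hq'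
      obtain ⟨t', htg, hstar, hΓ0⟩ := soundness R hlin hgrow C.toCSetup hwg hsat
      have hA : Reaches C.A.trans t' q :=
        (reaches_Γ0_sep C.toCSetup hΓ0).1 (C.hfinal hqQf)
      refine ⟨t', ?_, hstar⟩
      rw [C.hT]
      exact ⟨htg, q, hqQf, hA⟩
  · rintro ⟨⟨p0, hp0⟩, hcov⟩
    have hnr : ¬ R.RedexPos s [] := by
      intro hroot
      obtain ⟨u, hrep, t, htNF, hstar⟩ := hcov [] hroot
      rw [replaceAt_nil] at hrep
      cases Option.some.inj hrep
      have ht := bullet_liftB_star hstar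
      rw [ht] at htNF
      exact bullet_not_mem_NF htNF
    set P : Set Q := { q | (∃ p, R.RedexPos s p ∧ ∃ w,
        (liftB s).replaceAt p (Term.var 0) = some w ∧
        ReachesT C.Γ' (fun _ => C.enc (Term.var 0)) w q) ∧ q ∈ C.A.final } with hP
    have h1 : ∀ q ∈ P, (q = C.enc (Term.var 0) ∧ R.RedexPos s []) ∨
        ∃ p, p ≠ [] ∧ R.RedexPos s p ∧ ∃ w,
          (liftB s).replaceAt p (Term.var 0) = some w ∧
          ReachesT C.Γ' (fun _ => C.enc (Term.var 0)) w q := by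
      rintro q ⟨⟨p, hrp, w, hrep, hrunw⟩, -⟩
      have hpne : p ≠ [] := by
        rintro rfl
        exact hnr hrp
      exact Or.inr ⟨p, hpne, hrp, w, hrep, hrunw⟩
    have h2 : R.RedexPos s [] → C.enc (Term.var 0) ∈ P := fun h => absurd h hnr
    have h3 : ∀ p, p ≠ [] → R.RedexPos s p → ∃ q ∈ P, R.RedexPos s p ∧
        ∃ w, (liftB s).replaceAt p (Term.var 0) = some w ∧
          ReachesT C.Γ' (fun _ => C.enc (Term.var 0)) w q := by
      intro p hpne hrp
      obtain ⟨u, hrep, t, htNF, hstar⟩ := hcov p hrp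
      obtain ⟨qf, hqf, hrunT⟩ := completeness hlin C.toCSetup hstar htNF
      have hrep' := debullet_replaceAt hrep
      rw [debullet_liftB] at hrep'
      exact ⟨qf, ⟨⟨p, hrp, debullet u, hrep', hrunT.mono C.Γsat_le_Γ'⟩, hqf⟩,
        hrp, debullet u, hrep', hrunT.mono C.Γsat_le_Γ'⟩
    have hD := Dcomplete hlin C s hs P h1 h2 h3
    exact ⟨hs, (dn C.Γ' (liftB s), P),
      ⟨reaches_qr_of_redexPos C p0 s hs hp0, fun q hq => hq.2⟩, hD⟩
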